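/- arXiv:2112.02313 — 3 statements merged into one kernel-verified Lean document; each statement's English description precedes it below -/
import Mathlib

section
/- For every integer k ≥ 1 and every ε > 0 there exist constants C = C(k,ε) and d = d(k,ε) such that for every graph G on n vertices with mad(G) ≤ k − ε, any two k-colorings of G are Kempe equivalent up to C·n^d Kempe changes. -/
open SimpleGraph

/-- A proper coloring of `G` with colors in `C`. -/
def IsProperColoring {V C : Type*} (G : SimpleGraph V) (α : V → C) : Prop :=
  ∀ ⦃u v : V⦄, G.Adj u v → α u ≠ α v

/-- `u` lies in the Kempe chain of `v` for the colors `a`, `b`, computed in the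
subgraph of `G` induced by the vertex set `S`. -/
def InKempeChainOn {V C : Type*} (G : SimpleGraph V) (S : Set V) (α : V → C)
    (a b : C) (v u : V) : Prop :=
  Relation.ReflTransGen
    (fun x y => G.Adj x y ∧ x ∈ S ∧ y ∈ S ∧ (α x = a ∨ α x = b) ∧ (α y = a ∨ α y = b)) v u

/-- `u` lies in the Kempe chain of `v` for the colors `a`, `b` in `G`. -/
def InKempeChain {V C : Type*} (G : SimpleGraph V) (α : V → C) (a b : C) (v u : V) : Prop :=
  InKempeChainOn G Set.univ α a b v u

/-- `β` is obtained from `α` by performing a single Kempe change: the colors `a` and `b`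
are swapped on the Kempe chain containing `v`. -/
def KempeStep {V C : Type*} [DecidableEq C] (G : SimpleGraph V) (α β : V → C) : Prop :=
  ∃ (a b : C) (v : V), (α v = a ∨ α v = b) ∧
    (∀ u, InKempeChain G α a b v u → β u = Equiv.swap a b (α u)) ∧
    (∀ u, ¬InKempeChain G α a b v u → β u = α u)

/-- `α` and `β` are Kempe equivalent up to `N` Kempe changes, all intermediate
colorings satisfying the predicate `P`. -/
def KempeEquivIn {V C : Type*} [DecidableEq C] (G : SimpleGraph V) (P : (V → C) → Prop)
    (N : ℕ) (α β : V → C) : Prop :=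
  ∃ (m : ℕ) (f : ℕ → V → C), m ≤ N ∧ f 0 = α ∧ f m = β ∧
    (∀ i ≤ m, P (f i)) ∧ ∀ i < m, KempeStep G (f i) (f (i + 1))

namespace KempeWork
set_option linter.unusedSectionVars false

open Finset

attribute [local instance 10] Classical.propDecidable

variable {V : Type*} [Fintype V] [DecidableEq V] {k : ℕ}

/-- Kempe chain relative to a finite vertex set. -/
def Chain (G : SimpleGraph V) (W : Finset V) (γ : V → Fin k) (a b : Fin k) (v u : V) : Prop :=
  InKempeChainOn G (↑W) γ a b v u

/-- Flip one Kempe chain (guarded). -/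
noncomputable def flip (G : SimpleGraph V) (W : Finset V) (γ : V → Fin k) (a b : Fin k)
    (v : V) : V → Fin k :=
  if v ∈ W ∧ (γ v = a ∨ γ v = b) then
    (fun u => if Chain G W γ a b v u then Equiv.swap a b (γ u) else γ u)
  else γ

abbrev Scr (V : Type*) (k : ℕ) := List ((Fin k × Fin k) × List V)

noncomputable def runPhase (G : SimpleGraph V) (W : Finset V) (γ : V → Fin k)
    (pr : Fin k × Fin k) (l : List V) : V → Fin k :=
  l.foldl (fun γ v => flip G W γ pr.1 pr.2 v) γ

noncomputable def runScr (G : SimpleGraph V) (W : Finset V) (γ : V → Fin k)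
    (sc : Scr V k) : V → Fin k :=
  sc.foldl (fun γ ph => runPhase G W γ ph.1 ph.2) γ

def steps (sc : Scr V k) : ℕ := (sc.map fun ph => ph.2.length).sum

def SCwf (W : Finset V) (sc : Scr V k) : Prop := ∀ ph ∈ sc, ∀ v ∈ ph.2, v ∈ W

def ProperOn (G : SimpleGraph V) (W : Finset V) (γ : V → Fin k) : Prop :=
  ∀ ⦃u⦄, u ∈ W → ∀ ⦃w⦄, w ∈ W → G.Adj u w → γ u ≠ γ w

variable {G : SimpleGraph V}

section ChainLemmas

lemma chain_refl (W : Finset V) (γ : V → Fin k) (a b : Fin k) (v : V) :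
    Chain G W γ a b v v := Relation.ReflTransGen.refl

lemma chain_mem {W : Finset V} {γ : V → Fin k} {a b : Fin k} {v u : V}
    (hv : v ∈ W) (h : Chain G W γ a b v u) : u ∈ W := by
  induction h with
  | refl => exact hv
  | tail _ h2 _ => exact h2.2.2.1

lemma chain_col {W : Finset V} {γ : V → Fin k} {a b : Fin k} {v u : V}
    (hv : γ v = a ∨ γ v = b) (h : Chain G W γ a b v u) : γ u = a ∨ γ u = b := by
  induction h with
  | refl => exact hv
  | tail _ h2 _ => exact h2.2.2.2.2

lemma chain_mono {W W' : Finset V} (hW : W ⊆ W') {γ : V → Fin k} {a b : Fin k} {v u : V}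
    (h : Chain G W γ a b v u) : Chain G W' γ a b v u := by
  refine Relation.ReflTransGen.mono ?_ _ _ h
  rintro x y ⟨h1, h2, h3, h4⟩
  exact ⟨h1, hW h2, hW h3, h4⟩

lemma chain_congr {W : Finset V} {γ γ' : V → Fin k} (hγ : ∀ x ∈ W, γ x = γ' x)
    {a b : Fin k} {v u : V} (h : Chain G W γ a b v u) : Chain G W γ' a b v u := by
  refine Relation.ReflTransGen.mono ?_ _ _ h
  rintro x y ⟨h1, h2, h3, h4, h5⟩
  rw [hγ x h2] at h4; rw [hγ y h3] at h5
  exact ⟨h1, h2, h3, h4, h5⟩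

lemma chain_tail {W : Finset V} {γ : V → Fin k} {a b : Fin k} {v u u' : V}
    (h : Chain G W γ a b v u) (hadj : G.Adj u u') (hu : u ∈ W) (hu' : u' ∈ W)
    (hcu : γ u = a ∨ γ u = b) (hcu' : γ u' = a ∨ γ u' = b) :
    Chain G W γ a b v u' :=
  h.tail ⟨hadj, hu, hu', hcu, hcu'⟩

lemma chain_singleton {W : Finset V} {γ : V → Fin k} {a b : Fin k} {v u : V}
    (hnb : ∀ w ∈ W, G.Adj v w → ¬(γ w = a ∨ γ w = b))
    (h : Chain G W γ a b v u) : u = v := by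
  induction h with
  | refl => rfl
  | tail h1 h2 ih =>
      subst ih
      exact absurd h2.2.2.2.2 (hnb _ h2.2.2.1 h2.1)

end ChainLemmas

section FlipLemmas

variable {W : Finset V} {γ γ' : V → Fin k} {a b : Fin k} {v u : V}

lemma flip_of_neg (h : ¬(v ∈ W ∧ (γ v = a ∨ γ v = b))) : flip G W γ a b v = γ := by
  rw [flip, if_neg h]

lemma flip_eq_of_chain (hg : v ∈ W ∧ (γ v = a ∨ γ v = b))
    (hc : Chain G W γ a b v u) : flip G W γ a b v u = Equiv.swap a b (γ u) := by
  rw [flip, if_pos hg]; simp only [if_pos hc]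

lemma flip_eq_of_not_chain (hc : ¬Chain G W γ a b v u) : flip G W γ a b v u = γ u := by
  by_cases hg : v ∈ W ∧ (γ v = a ∨ γ v = b)
  · rw [flip, if_pos hg]; simp only [if_neg hc]
  · rw [flip_of_neg hg]

lemma flip_outside (hu : u ∉ W) : flip G W γ a b v u = γ u := by
  by_cases hg : v ∈ W ∧ (γ v = a ∨ γ v = b)
  · exact flip_eq_of_not_chain fun hc => hu (chain_mem hg.1 hc)
  · rw [flip_of_neg hg]

lemma swap_ab_iff {c : Fin k} : (Equiv.swap a b c = a ∨ Equiv.swap a b c = b) ↔ (c = a ∨ c = b) := by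
  constructor
  · rintro (h | h)
    · rcases eq_or_ne c a with rfl | hca
      · exact Or.inl rfl
      · rcases eq_or_ne c b with rfl | hcb
        · exact Or.inr rfl
        · rw [Equiv.swap_apply_of_ne_of_ne hca hcb] at h; exact Or.inl h
    · rcases eq_or_ne c a with rfl | hca
      · exact Or.inl rfl
      · rcases eq_or_ne c b with rfl | hcb
        · exact Or.inr rfl
        · rw [Equiv.swap_apply_of_ne_of_ne hca hcb] at h; exact Or.inr h
  · rintro (rfl | rfl)
    · rw [Equiv.swap_apply_left]; exact Or.inr rfl
    · rw [Equiv.swap_apply_right]; exact Or.inl rfl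

lemma flip_ab : (flip G W γ a b v u = a ∨ flip G W γ a b v u = b) ↔ (γ u = a ∨ γ u = b) := by
  by_cases hg : v ∈ W ∧ (γ v = a ∨ γ v = b)
  · by_cases hc : Chain G W γ a b v u
    · rw [flip_eq_of_chain hg hc]; exact swap_ab_iff
    · rw [flip_eq_of_not_chain hc]
  · rw [flip_of_neg hg]

lemma flip_proper (h : ProperOn G W γ) : ProperOn G W (flip G W γ a b v) := by
  by_cases hg : v ∈ W ∧ (γ v = a ∨ γ v = b)
  · intro x hx y hy hadj
    by_cases hcx : Chain G W γ a b v x <;> by_cases hcy : Chain G W γ a b v y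
    · rw [flip_eq_of_chain hg hcx, flip_eq_of_chain hg hcy]
      exact fun hh => h hx hy hadj (Equiv.injective _ hh)
    · rw [flip_eq_of_chain hg hcx, flip_eq_of_not_chain hcy]
      have hyab : ¬(γ y = a ∨ γ y = b) := by
        intro hab
        exact hcy (chain_tail hcx hadj hx hy (chain_col hg.2 hcx) hab)
      have : Equiv.swap a b (γ x) = a ∨ Equiv.swap a b (γ x) = b :=
        swap_ab_iff.mpr (chain_col hg.2 hcx)
      intro hh; rw [hh] at this; exact hyab this
    · rw [flip_eq_of_not_chain hcx, flip_eq_of_chain hg hcy]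
      have hxab : ¬(γ x = a ∨ γ x = b) := by
        intro hab
        exact hcx (chain_tail hcy hadj.symm hy hx (chain_col hg.2 hcy) hab)
      have : Equiv.swap a b (γ y) = a ∨ Equiv.swap a b (γ y) = b :=
        swap_ab_iff.mpr (chain_col hg.2 hcy)
      intro hh; rw [← hh] at this; exact hxab this
    · rw [flip_eq_of_not_chain hcx, flip_eq_of_not_chain hcy]
      exact h hx hy hadj
  · rw [flip_of_neg hg]; exact h

lemma flip_congr_on (hγ : ∀ x ∈ W, γ x = γ' x) (hu : u ∈ W) :
    flip G W γ a b v u = flip G W γ' a b v u := by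
  by_cases hvW : v ∈ W
  · have hvv : γ v = γ' v := hγ v hvW
    by_cases hg : γ v = a ∨ γ v = b
    · have hg' : γ' v = a ∨ γ' v = b := by rw [← hvv]; exact hg
      by_cases hc : Chain G W γ a b v u
      · rw [flip_eq_of_chain ⟨hvW, hg⟩ hc,
          flip_eq_of_chain ⟨hvW, hg'⟩ (chain_congr hγ hc), hγ u hu]
      · have hc' : ¬Chain G W γ' a b v u := fun h =>
          hc (chain_congr (fun x hx => (hγ x hx).symm) h)
        rw [flip_eq_of_not_chain hc, flip_eq_of_not_chain hc']
        exact hγ u hu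
    · have hg' : ¬(γ' v = a ∨ γ' v = b) := by rw [← hvv]; exact hg
      rw [flip_of_neg (by tauto), flip_of_neg (by tauto)]
      exact hγ u hu
  · rw [flip_of_neg (by tauto), flip_of_neg (by tauto)]
    exact hγ u hu

lemma flip_singleton (hg : v ∈ W ∧ (γ v = a ∨ γ v = b))
    (hnb : ∀ w ∈ W, G.Adj v w → ¬(γ w = a ∨ γ w = b)) :
    ∀ u, flip G W γ a b v u = if u = v then Equiv.swap a b (γ v) else γ u := by
  intro u
  by_cases huv : u = v
  · subst huv
    rw [flip_eq_of_chain hg (chain_refl _ _ _ _ _), if_pos rfl]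
  · rw [if_neg huv, flip_eq_of_not_chain]
    intro hc; exact huv (chain_singleton hnb hc)

end FlipLemmas

section RunLemmas

variable {W : Finset V} {γ γ' : V → Fin k}

lemma runScr_append (sc₁ sc₂ : Scr V k) (γ : V → Fin k) :
    runScr G W γ (sc₁ ++ sc₂) = runScr G W (runScr G W γ sc₁) sc₂ := by
  simp [runScr, List.foldl_append]

lemma steps_append (sc₁ sc₂ : Scr V k) : steps (sc₁ ++ sc₂) = steps sc₁ + steps sc₂ := by
  simp [steps]

lemma runPhase_proper {pr : Fin k × Fin k} (l : List V) :
    ∀ γ : V → Fin k, ProperOn G W γ → ProperOn G W (runPhase G W γ pr l) := by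
  induction l with
  | nil => exact fun γ h => h
  | cons v tl ih => exact fun γ h => ih _ (flip_proper h)

lemma runScr_proper (sc : Scr V k) :
    ∀ γ : V → Fin k, ProperOn G W γ → ProperOn G W (runScr G W γ sc) := by
  induction sc with
  | nil => exact fun γ h => h
  | cons ph tl ih => exact fun γ h => ih _ (runPhase_proper _ _ h)

lemma runPhase_congr_on {pr : Fin k × Fin k} (l : List V) :
    ∀ {γ γ' : V → Fin k}, (∀ x ∈ W, γ x = γ' x) →
      ∀ u ∈ W, runPhase G W γ pr l u = runPhase G W γ' pr l u := by
  induction l with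
  | nil => exact fun h u hu => h u hu
  | cons v tl ih =>
      intro γ γ' h u hu
      exact ih (fun x hx => flip_congr_on h hx) u hu

lemma runScr_congr_on (sc : Scr V k) :
    ∀ {γ γ' : V → Fin k}, (∀ x ∈ W, γ x = γ' x) →
      ∀ u ∈ W, runScr G W γ sc u = runScr G W γ' sc u := by
  induction sc with
  | nil => exact fun h u hu => h u hu
  | cons ph tl ih =>
      intro γ γ' h u hu
      exact ih (fun x hx => runPhase_congr_on _ h x hx) u hu

end RunLemmas

section Restrict

/-- pendant condition for the removed set `W' \ W''`. -/
def Pend (G : SimpleGraph V) (W' W'' : Finset V) (γ : V → Fin k) (a b : Fin k) : Prop :=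
  ∀ s ∈ W' \ W'', (γ s = a ∨ γ s = b) →
    (W'.filter fun u => G.Adj s u ∧ (γ u = a ∨ γ u = b)).card ≤ 1

variable {W'' W' : Finset V} {γ : V → Fin k} {a b : Fin k} {v u : V}

lemma chain_restrict (hsub : W'' ⊆ W')
    (hind : ∀ s ∈ W' \ W'', ∀ t ∈ W' \ W'', ¬G.Adj s t)
    (hpend : Pend G W' W'' γ a b)
    (hv : v ∈ W'') (hgv : γ v = a ∨ γ v = b) (h : Chain G W' γ a b v u) :
    (u ∈ W'' ∧ Chain G W'' γ a b v u) ∨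
      (u ∈ W' \ W'' ∧ ∃ x ∈ W'', Chain G W'' γ a b v x ∧ G.Adj u x) := by
  induction h with
  | refl => exact Or.inl ⟨hv, chain_refl _ _ _ _ _⟩
  | @tail p q hvb hbc ih =>
      obtain ⟨hadj, hbW', hcW', hbab, hcab⟩ := hbc
      rw [Finset.mem_coe] at hbW' hcW'
      rcases ih with ⟨hb'', hch⟩ | ⟨hbS, x, hx, hchx, hadjx⟩
      · by_cases hc'' : q ∈ W''
        · exact Or.inl ⟨hc'', chain_tail hch hadj hb'' hc'' hbab hcab⟩
        · exact Or.inr ⟨Finset.mem_sdiff.mpr ⟨hcW', hc''⟩, p, hb'', hch, hadj.symm⟩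
      · by_cases hc'' : q ∈ W''
        · have hxmem : x ∈ W'.filter fun u => G.Adj p u ∧ (γ u = a ∨ γ u = b) :=
            Finset.mem_filter.mpr ⟨hsub hx, hadjx, chain_col hgv hchx⟩
          have hcmem : q ∈ W'.filter fun u => G.Adj p u ∧ (γ u = a ∨ γ u = b) :=
            Finset.mem_filter.mpr ⟨hcW', hadj, hcab⟩
          have hqx := Finset.card_le_one.mp (hpend p hbS hbab) q hcmem x hxmem
          rw [hqx]
          exact Or.inl ⟨hx, hchx⟩
        · exact absurd hadj (hind p hbS q (Finset.mem_sdiff.mpr ⟨hcW', hc''⟩))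

lemma chain_restrict_mem (hsub : W'' ⊆ W')
    (hind : ∀ s ∈ W' \ W'', ∀ t ∈ W' \ W'', ¬G.Adj s t)
    (hpend : Pend G W' W'' γ a b)
    (hv : v ∈ W'') (hgv : γ v = a ∨ γ v = b) (h : Chain G W' γ a b v u)
    (hu : u ∈ W'') : Chain G W'' γ a b v u := by
  rcases chain_restrict hsub hind hpend hv hgv h with ⟨_, hc⟩ | ⟨hmem, _⟩
  · exact hc
  · exact absurd hu (Finset.mem_sdiff.mp hmem).2

lemma flip_restrict (hsub : W'' ⊆ W')
    (hind : ∀ s ∈ W' \ W'', ∀ t ∈ W' \ W'', ¬G.Adj s t)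
    (hpend : Pend G W' W'' γ a b)
    (hv : v ∈ W'') (hu : u ∈ W'') :
    flip G W' γ a b v u = flip G W'' γ a b v u := by
  by_cases hg : γ v = a ∨ γ v = b
  · by_cases hc : Chain G W'' γ a b v u
    · rw [flip_eq_of_chain ⟨hsub hv, hg⟩ (chain_mono hsub hc), flip_eq_of_chain ⟨hv, hg⟩ hc]
    · have hc' : ¬Chain G W' γ a b v u := fun h =>
        hc (chain_restrict_mem hsub hind hpend hv hg h hu)
      rw [flip_eq_of_not_chain hc', flip_eq_of_not_chain hc]
  · rw [flip_of_neg (by tauto), flip_of_neg (by tauto)]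

lemma pend_flip (hpend : Pend G W' W'' γ a b) :
    Pend G W' W'' (flip G W' γ a b v) a b := by
  intro s hs hab
  have hab' : γ s = a ∨ γ s = b := flip_ab.mp hab
  have : (W'.filter fun u => G.Adj s u ∧ (flip G W' γ a b v u = a ∨ flip G W' γ a b v u = b))
      = W'.filter fun u => G.Adj s u ∧ (γ u = a ∨ γ u = b) := by
    apply Finset.filter_congr
    intro x _
    exact and_congr_right fun _ => flip_ab
  rw [this]
  exact hpend s hs hab'

lemma phase_restrict (hsub : W'' ⊆ W')
    (hind : ∀ s ∈ W' \ W'', ∀ t ∈ W' \ W'', ¬G.Adj s t) (l : List V)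
    (hl : ∀ v ∈ l, v ∈ W'') :
    ∀ γ : V → Fin k, ProperOn G W' γ → Pend G W' W'' γ a b →
      (∀ u ∈ W'', runPhase G W' γ (a, b) l u = runPhase G W'' γ (a, b) l u) ∧
        ProperOn G W' (runPhase G W' γ (a, b) l) ∧
        Pend G W' W'' (runPhase G W' γ (a, b) l) a b := by
  induction l with
  | nil => exact fun γ hp hpend => ⟨fun u _ => rfl, hp, hpend⟩
  | cons v tl ih =>
      intro γ hp hpend
      have hv : v ∈ W'' := hl v (List.mem_cons_self)
      have hfr : ∀ u ∈ W'', flip G W' γ a b v u = flip G W'' γ a b v u :=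
        fun u hu => flip_restrict hsub hind hpend hv hu
      obtain ⟨hagree, hprop, hpend'⟩ :=
        ih (fun w hw => hl w (List.mem_cons_of_mem _ hw)) (flip G W' γ a b v)
          (flip_proper hp) (pend_flip hpend)
      refine ⟨?_, hprop, hpend'⟩
      intro u hu
      have h1 : runPhase G W'' (flip G W' γ a b v) (a, b) tl u
          = runPhase G W'' (flip G W'' γ a b v) (a, b) tl u :=
        runPhase_congr_on tl hfr u hu
      calc runPhase G W' γ (a, b) (v :: tl) u
          = runPhase G W' (flip G W' γ a b v) (a, b) tl u := rfl
        _ = runPhase G W'' (flip G W' γ a b v) (a, b) tl u := hagree u hu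
        _ = runPhase G W'' (flip G W'' γ a b v) (a, b) tl u := h1
        _ = runPhase G W'' γ (a, b) (v :: tl) u := rfl

end Restrict

section Block

variable {W' : Finset V} {Sset : Finset V}

/-- available colors to move `s` aside -/
noncomputable def avail (G : SimpleGraph V) (W' : Finset V) (γ : V → Fin k) (a b : Fin k)
    (s : V) : Finset (Fin k) :=
  Finset.univ \ (insert a (insert b ((W'.filter fun u => G.Adj s u).image γ)))

noncomputable def patch (γ₀ τ : V → Fin k) (E : Finset V) : V → Fin k :=
  fun u => if u ∈ E then τ u else γ₀ u

noncomputable def blockScr (γ₀ : V → Fin k) (D : Finset V) (τ : V → Fin k) : Scr V k :=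
  (Finset.univ ×ˢ (Finset.univ : Finset (Fin k))).toList.map
    (fun pr => (pr, (D.filter fun s => γ₀ s = pr.1 ∧ τ s = pr.2).toList))

variable {γ₀ τ : V → Fin k} {D : Finset V}

lemma block_phase (hSW : Sset ⊆ W')
    (hS : ∀ s ∈ Sset, ∀ t ∈ Sset, ¬G.Adj s t)
    (hp : ProperOn G W' γ₀) (hD : D ⊆ Sset)
    (hfree : ∀ s ∈ D, ∀ u ∈ W', G.Adj s u → γ₀ u ≠ τ s)
    (c c' : Fin k) (l : List V) :
    ∀ E : Finset V, E ⊆ D → l.Nodup →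
      (∀ s ∈ l, s ∈ D ∧ γ₀ s = c ∧ τ s = c' ∧ s ∉ E) →
      runPhase G W' (patch γ₀ τ E) (c, c') l = patch γ₀ τ (E ∪ l.toFinset) := by
  induction l with
  | nil => intro E _ _ _; rw [List.toFinset_nil, Finset.union_empty]; rfl
  | cons s tl ih =>
      intro E hE hnd hmem
      obtain ⟨hsD, hc, hc', hsE⟩ := hmem s (List.mem_cons_self)
      have hsS : s ∈ Sset := hD hsD
      have hsW : s ∈ W' := hSW hsS
      have hguard : s ∈ W' ∧ (patch γ₀ τ E s = c ∨ patch γ₀ τ E s = c') := by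
        refine ⟨hsW, Or.inl ?_⟩
        simp only [patch, if_neg hsE]; exact hc
      have hnb : ∀ w ∈ W', G.Adj s w → ¬(patch γ₀ τ E w = c ∨ patch γ₀ τ E w = c') := by
        intro w hw hadj
        have hwS : w ∉ Sset := fun hwS => hS s hsS w hwS hadj
        have hwE : w ∉ E := fun hwE => hwS (hD (hE hwE))
        have hwp : patch γ₀ τ E w = γ₀ w := by simp only [patch, if_neg hwE]
        rw [hwp]
        rintro (h | h)
        · exact hp hsW hw hadj (by rw [hc, h])
        · exact hfree s hsD w hw hadj (by rw [h, hc'])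
      have hstep : flip G W' (patch γ₀ τ E) c c' s = patch γ₀ τ (insert s E) := by
        funext u
        rw [flip_singleton hguard hnb u]
        by_cases hus : u = s
        · subst hus
          rw [if_pos rfl]
          have h1 : patch γ₀ τ E u = c := by
            simp only [patch]; rw [if_neg hsE]; exact hc
          have h2 : patch γ₀ τ (insert u E) u = τ u := by
            simp only [patch]; rw [if_pos (Finset.mem_insert_self _ _)]
          rw [h1, Equiv.swap_apply_left, h2, hc']
        · rw [if_neg hus]
          simp only [patch]
          have hmemiff : u ∈ insert s E ↔ u ∈ E := by simp [Finset.mem_insert, hus]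
          by_cases hu : u ∈ E
          · rw [if_pos hu, if_pos (hmemiff.mpr hu)]
          · rw [if_neg hu, if_neg (fun hh => hu (hmemiff.mp hh))]
      have htl : runPhase G W' (patch γ₀ τ E) (c, c') (s :: tl)
          = runPhase G W' (patch γ₀ τ (insert s E)) (c, c') tl := by
        show runPhase G W' (flip G W' (patch γ₀ τ E) c c' s) (c, c') tl = _
        rw [hstep]
      rw [htl, ih (insert s E) (Finset.insert_subset hsD hE) hnd.of_cons ?_]
      · congr 1
        rw [List.toFinset_cons, Finset.union_insert, Finset.insert_union]
      · intro t ht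
        obtain ⟨h1, h2, h3, h4⟩ := hmem t (List.mem_cons_of_mem _ ht)
        refine ⟨h1, h2, h3, ?_⟩
        rw [Finset.mem_insert]
        rintro (rfl | hh)
        · exact (List.nodup_cons.mp hnd).1 ht
        · exact h4 hh

lemma block_run (hSW : Sset ⊆ W')
    (hS : ∀ s ∈ Sset, ∀ t ∈ Sset, ¬G.Adj s t)
    (hp : ProperOn G W' γ₀) (hD : D ⊆ Sset)
    (hfree : ∀ s ∈ D, ∀ u ∈ W', G.Adj s u → γ₀ u ≠ τ s) :
    runScr G W' γ₀ (blockScr γ₀ D τ) = patch γ₀ τ D := by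
  have key : ∀ L : List (Fin k × Fin k), L.Nodup → ∀ E : Finset V, E ⊆ D →
      (∀ s ∈ D, (γ₀ s, τ s) ∈ L → s ∉ E) →
      runScr G W' (patch γ₀ τ E)
        (L.map fun pr => (pr, (D.filter fun s => γ₀ s = pr.1 ∧ τ s = pr.2).toList))
        = patch γ₀ τ (E ∪ D.filter fun s => (γ₀ s, τ s) ∈ L) := by
    intro L
    induction L with
    | nil =>
        intro _ E hE _
        simp only [List.map_nil]
        have : (D.filter fun s => (γ₀ s, τ s) ∈ ([] : List (Fin k × Fin k))) = ∅ := by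
          simp
        rw [this, Finset.union_empty]; rfl
    | cons pr L' ih =>
        intro hnd E hE hdisj
        have hnd' := List.nodup_cons.mp hnd
        have hmem1 : ∀ t ∈ (D.filter fun s => γ₀ s = pr.1 ∧ τ s = pr.2).toList,
            t ∈ D ∧ γ₀ t = pr.1 ∧ τ t = pr.2 ∧ t ∉ E := by
          intro t ht
          rw [Finset.mem_toList, Finset.mem_filter] at ht
          refine ⟨ht.1, ht.2.1, ht.2.2, hdisj t ht.1 ?_⟩
          rw [List.mem_cons]
          exact Or.inl (Prod.ext ht.2.1 ht.2.2)
        have hphase := block_phase hSW hS hp hD hfree pr.1 pr.2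
          (D.filter fun s => γ₀ s = pr.1 ∧ τ s = pr.2).toList E hE
          (Finset.nodup_toList _) hmem1
        rw [Finset.toList_toFinset] at hphase
        have hdisj1 : ∀ t ∈ D, (γ₀ t, τ t) ∈ L' →
            t ∉ E ∪ D.filter fun s => γ₀ s = pr.1 ∧ τ s = pr.2 := by
          intro t htD htL'
          rw [Finset.mem_union, Finset.mem_filter]
          rintro (hh | ⟨_, hh1, hh2⟩)
          · exact hdisj t htD (List.mem_cons_of_mem _ htL') hh
          · have hpr : (γ₀ t, τ t) = pr := Prod.ext hh1 hh2
            rw [hpr] at htL'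
            exact hnd'.1 htL'
        have hihr := ih hnd'.2 (E ∪ D.filter fun s => γ₀ s = pr.1 ∧ τ s = pr.2)
          (Finset.union_subset hE (Finset.filter_subset _ _)) hdisj1
        have hset : (E ∪ D.filter fun s => γ₀ s = pr.1 ∧ τ s = pr.2)
            ∪ (D.filter fun s => (γ₀ s, τ s) ∈ L')
            = E ∪ D.filter fun s => (γ₀ s, τ s) ∈ pr :: L' := by
          ext t
          simp only [Finset.mem_union, Finset.mem_filter, List.mem_cons, Prod.ext_iff]
          tauto
        calc runScr G W' (patch γ₀ τ E)
              ((pr :: L').map fun pr => (pr, (D.filter fun s => γ₀ s = pr.1 ∧ τ s = pr.2).toList))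
            = runScr G W' (runPhase G W' (patch γ₀ τ E) (pr.1, pr.2)
                (D.filter fun s => γ₀ s = pr.1 ∧ τ s = pr.2).toList)
                (L'.map fun pr => (pr, (D.filter fun s => γ₀ s = pr.1 ∧ τ s = pr.2).toList)) := rfl
          _ = patch γ₀ τ ((E ∪ D.filter fun s => γ₀ s = pr.1 ∧ τ s = pr.2)
                ∪ (D.filter fun s => (γ₀ s, τ s) ∈ L')) := by rw [hphase, hihr]
          _ = patch γ₀ τ (E ∪ D.filter fun s => (γ₀ s, τ s) ∈ pr :: L') := by rw [hset]
  have h0 := key (Finset.univ ×ˢ (Finset.univ : Finset (Fin k))).toList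
    (Finset.nodup_toList _) ∅ (Finset.empty_subset _) (by simp)
  have hpatch0 : patch γ₀ τ (∅ : Finset V) = γ₀ := by
    funext u; simp [patch]
  have hfilt : (D.filter fun s =>
      (γ₀ s, τ s) ∈ (Finset.univ ×ˢ (Finset.univ : Finset (Fin k))).toList) = D := by
    apply Finset.filter_true_of_mem
    intro s _
    rw [Finset.mem_toList]
    exact Finset.mem_product.mpr ⟨Finset.mem_univ _, Finset.mem_univ _⟩
  rw [hpatch0] at h0
  rw [blockScr, h0, hfilt, Finset.empty_union]

lemma block_len : (blockScr γ₀ D τ).length = k * k := by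
  rw [blockScr, List.length_map, Finset.length_toList, Finset.card_product]
  simp

lemma block_steps : steps (blockScr γ₀ D τ) ≤ D.card := by
  rw [blockScr, steps, List.map_map]
  have : ((Finset.univ ×ˢ (Finset.univ : Finset (Fin k))).toList.map
      ((fun ph => ph.2.length) ∘ fun pr =>
        ((pr : Fin k × Fin k), (D.filter fun s => γ₀ s = pr.1 ∧ τ s = pr.2).toList))).sum
      = ∑ pr ∈ Finset.univ ×ˢ (Finset.univ : Finset (Fin k)),
          (D.filter fun s => γ₀ s = pr.1 ∧ τ s = pr.2).card := by
    rw [← Finset.sum_map_toList]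
    congr 1
    apply List.map_congr_left
    intro pr _
    simp [Finset.length_toList]
  rw [this]
  have hswap : ∀ pr : Fin k × Fin k, (D.filter fun s => γ₀ s = pr.1 ∧ τ s = pr.2).card
      = ∑ s ∈ D, if γ₀ s = pr.1 ∧ τ s = pr.2 then 1 else 0 := by
    intro pr; rw [Finset.card_filter]
  calc (∑ pr ∈ Finset.univ ×ˢ (Finset.univ : Finset (Fin k)),
          (D.filter fun s => γ₀ s = pr.1 ∧ τ s = pr.2).card)
      = ∑ pr ∈ Finset.univ ×ˢ (Finset.univ : Finset (Fin k)),
          ∑ s ∈ D, if γ₀ s = pr.1 ∧ τ s = pr.2 then 1 else 0 := by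
        exact Finset.sum_congr rfl fun pr _ => hswap pr
    _ = ∑ s ∈ D, ∑ pr ∈ Finset.univ ×ˢ (Finset.univ : Finset (Fin k)),
          if γ₀ s = pr.1 ∧ τ s = pr.2 then 1 else 0 := Finset.sum_comm
    _ ≤ ∑ s ∈ D, 1 := by
        apply Finset.sum_le_sum
        intro s _
        have : ∀ pr : Fin k × Fin k, (if γ₀ s = pr.1 ∧ τ s = pr.2 then (1 : ℕ) else 0)
            = if (γ₀ s, τ s) = pr then 1 else 0 := by
          intro pr
          congr 1
          simp [Prod.ext_iff]
        rw [Finset.sum_congr rfl fun pr _ => this pr, Finset.sum_ite_eq]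
        simp
    _ = D.card := by simp

end Block

section MoveAside

variable {W'' W' : Finset V} {γ : V → Fin k} {a b : Fin k}

lemma mem_avail {s : V} {c : Fin k} :
    c ∈ avail G W' γ a b s ↔ (c ≠ a ∧ c ≠ b ∧ ∀ u ∈ W', G.Adj s u → γ u ≠ c) := by
  simp only [avail, Finset.mem_sdiff, Finset.mem_univ, true_and, Finset.mem_insert,
    Finset.mem_image, Finset.mem_filter]
  constructor
  · intro h
    push_neg at h
    exact ⟨h.1, h.2.1, fun u hu hadj hc => h.2.2 u ⟨hu, hadj⟩ hc⟩
  · rintro ⟨h1, h2, h3⟩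
    push_neg
    exact ⟨h1, h2, fun u hu hc => h3 u hu.1 hu.2 hc⟩

lemma pend_establish (hsub : W'' ⊆ W')
    (hind : ∀ s ∈ W' \ W'', ∀ t ∈ W' \ W'', ¬G.Adj s t)
    (hdeg : ∀ s ∈ W' \ W'', (W'.filter fun u => G.Adj s u).card + 1 ≤ k)
    (hp : ProperOn G W' γ)
    (D₀ : Finset V)
    (hD₀ : D₀ = (W' \ W'').filter fun s => (γ s = a ∨ γ s = b) ∧ (avail G W' γ a b s).Nonempty)
    (τ₀ : V → Fin k) (hτ₀ : ∀ s ∈ D₀, τ₀ s ∈ avail G W' γ a b s) :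
    Pend G W' W'' (patch γ τ₀ D₀) a b := by
  intro s hs hab
  have hsD : s ∉ D₀ := by
    intro hmem
    have h1 : patch γ τ₀ D₀ s = τ₀ s := by simp only [patch]; rw [if_pos hmem]
    have h2 := mem_avail.mp (hτ₀ s hmem)
    rw [h1] at hab
    rcases hab with h | h
    · exact h2.1 h
    · exact h2.2.1 h
  have hps : patch γ τ₀ D₀ s = γ s := by simp only [patch]; rw [if_neg hsD]
  rw [hps] at hab
  have hav : ¬(avail G W' γ a b s).Nonempty := by
    intro hne
    apply hsD
    rw [hD₀]
    exact Finset.mem_filter.mpr ⟨hs, hab, hne⟩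
  rw [Finset.not_nonempty_iff_eq_empty, avail,
    Finset.sdiff_eq_empty_iff_subset] at hav
  have hagree : ∀ u, G.Adj s u → u ∈ W' → patch γ τ₀ D₀ u = γ u := by
    intro u hadj hu
    have huD : u ∉ D₀ := by
      intro huD
      have huD' := huD
      rw [hD₀, Finset.mem_filter] at huD'
      exact hind s hs u huD'.1 hadj
    simp only [patch]; rw [if_neg huD]
  have hfilt : (W'.filter fun u => G.Adj s u ∧ (patch γ τ₀ D₀ u = a ∨ patch γ τ₀ D₀ u = b))
      = (W'.filter fun u => G.Adj s u).filter fun u => γ u = a ∨ γ u = b := by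
    ext u
    simp only [Finset.mem_filter, and_assoc]
    constructor
    · rintro ⟨hu, hadj, hab'⟩
      rw [hagree u hadj hu] at hab'
      exact ⟨hu, hadj, hab'⟩
    · rintro ⟨hu, hadj, hab'⟩
      rw [← hagree u hadj hu] at hab'
      exact ⟨hu, hadj, hab'⟩
  rw [hfilt]
  have himg : Finset.univ \ insert a ({b} : Finset (Fin k)) ⊆
      ((W'.filter fun u => G.Adj s u).filter fun u => ¬(γ u = a ∨ γ u = b)).image γ := by
    intro c hc
    rw [Finset.mem_sdiff, Finset.mem_insert, Finset.mem_singleton] at hc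
    push_neg at hc
    have hcmem := hav (Finset.mem_univ c)
    rw [Finset.mem_insert, Finset.mem_insert] at hcmem
    rcases hcmem with h | h | h
    · exact absurd h hc.2.1
    · exact absurd h hc.2.2
    · obtain ⟨u, huF, hgu⟩ := Finset.mem_image.mp h
      refine Finset.mem_image.mpr ⟨u, Finset.mem_filter.mpr ⟨huF, ?_⟩, hgu⟩
      rw [hgu]
      rintro (rfl | rfl)
      · exact hc.2.1 rfl
      · exact hc.2.2 rfl
  have hc1 : k - (insert a ({b} : Finset (Fin k))).card ≤
      ((W'.filter fun u => G.Adj s u).filter fun u => ¬(γ u = a ∨ γ u = b)).card := by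
    calc k - (insert a ({b} : Finset (Fin k))).card
        = (Finset.univ \ insert a ({b} : Finset (Fin k))).card := by
          rw [Finset.card_sdiff_of_subset (Finset.subset_univ _)]
          simp
      _ ≤ (((W'.filter fun u => G.Adj s u).filter fun u => ¬(γ u = a ∨ γ u = b)).image γ).card :=
          Finset.card_le_card himg
      _ ≤ _ := Finset.card_image_le
  have hc2 : ((W'.filter fun u => G.Adj s u).filter fun u => γ u = a ∨ γ u = b).card
      + ((W'.filter fun u => G.Adj s u).filter fun u => ¬(γ u = a ∨ γ u = b)).card
      = (W'.filter fun u => G.Adj s u).card :=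
    Finset.card_filter_add_card_filter_not _
  have hc3 : (W'.filter fun u => G.Adj s u).card + 1 ≤ k := hdeg s hs
  have hc4 : (insert a ({b} : Finset (Fin k))).card ≤ 2 := by
    apply le_trans (Finset.card_insert_le _ _)
    simp
  omega

end MoveAside

section LiftAll

variable {W'' W' : Finset V}

lemma steps_cons (pr : Fin k × Fin k) (vs : List V) (sc : Scr V k) :
    steps (((pr, vs) : (Fin k × Fin k) × List V) :: sc) = vs.length + steps sc := by
  simp [steps]

lemma block_wf {γ₀ τ : V → Fin k} {D : Finset V} {W : Finset V} (hD : D ⊆ W) :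
    SCwf W (blockScr γ₀ D τ) := by
  intro ph hph v hv
  rw [blockScr, List.mem_map] at hph
  obtain ⟨pr, _, rfl⟩ := hph
  rw [Finset.mem_toList] at hv
  exact hD (Finset.filter_subset _ _ hv)

lemma liftAll (hsub : W'' ⊆ W')
    (hind : ∀ s ∈ W' \ W'', ∀ t ∈ W' \ W'', ¬G.Adj s t)
    (hdeg : ∀ s ∈ W' \ W'', (W'.filter fun u => G.Adj s u).card + 1 ≤ k) :
    ∀ sc'' : Scr V k, SCwf W'' sc'' → ∀ γ : V → Fin k, ProperOn G W' γ →
      ∃ sc' : Scr V k, SCwf W' sc' ∧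
        (∀ u ∈ W'', runScr G W' γ sc' u = runScr G W'' γ sc'' u) ∧
        sc'.length ≤ (k * k + 1) * sc''.length ∧
        steps sc' ≤ steps sc'' + sc''.length * (W' \ W'').card := by
  intro sc''
  induction sc'' with
  | nil =>
      intro _ γ hp
      exact ⟨[], by intro ph hph; simp at hph, fun u _ => rfl, by simp, by simp [steps]⟩
  | cons ph rest ih =>
      obtain ⟨⟨a, b⟩, vs⟩ := ph
      intro hwf γ hp
      have hvs : ∀ v ∈ vs, v ∈ W'' := hwf _ (List.mem_cons_self)
      have hwfr : SCwf W'' rest := fun p hp' => hwf p (List.mem_cons_of_mem _ hp')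
      set D₀ := (W' \ W'').filter
        fun s => (γ s = a ∨ γ s = b) ∧ (avail G W' γ a b s).Nonempty with hD₀
      set τ₀ : V → Fin k := fun s =>
        if h : (avail G W' γ a b s).Nonempty then (avail G W' γ a b s).min' h else γ s with hτ₀
      have hτ₀mem : ∀ s ∈ D₀, τ₀ s ∈ avail G W' γ a b s := by
        intro s hs
        rw [hD₀, Finset.mem_filter] at hs
        rw [hτ₀]; simp only
        rw [dif_pos hs.2.2]
        exact Finset.min'_mem _ _
      have hfree : ∀ s ∈ D₀, ∀ u ∈ W', G.Adj s u → γ u ≠ τ₀ s := by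
        intro s hs u hu hadj
        exact (mem_avail.mp (hτ₀mem s hs)).2.2 u hu hadj
      have hD₀sub : D₀ ⊆ W' \ W'' := Finset.filter_subset _ _
      have hblk : runScr G W' γ (blockScr γ D₀ τ₀) = patch γ τ₀ D₀ :=
        block_run Finset.sdiff_subset hind hp hD₀sub hfree
      set γ₁ := patch γ τ₀ D₀ with hγ₁
      have hγ₁W'' : ∀ u ∈ W'', γ₁ u = γ u := by
        intro u hu
        have : u ∉ D₀ := fun hh => (Finset.mem_sdiff.mp (hD₀sub hh)).2 hu
        rw [hγ₁]; simp only [patch]; rw [if_neg this]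
      have hp₁ : ProperOn G W' γ₁ := by
        rw [← hblk]; exact runScr_proper _ _ hp
      have hpend₁ : Pend G W' W'' γ₁ a b :=
        pend_establish hsub hind hdeg hp D₀ hD₀ τ₀ hτ₀mem
      obtain ⟨hagree, hp₂, _⟩ := phase_restrict hsub hind vs hvs γ₁ hp₁ hpend₁
      set γ₂ := runPhase G W' γ₁ (a, b) vs with hγ₂
      obtain ⟨sc'r, hwf'r, hagr, hlen'r, hsteps'r⟩ := ih hwfr γ₂ hp₂
      refine ⟨blockScr γ D₀ τ₀ ++ (((a, b), vs) :: sc'r), ?_, ?_, ?_, ?_⟩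
      · intro p hp' v hv
        rw [List.mem_append] at hp'
        rcases hp' with h | h
        · exact block_wf (hD₀sub.trans Finset.sdiff_subset) _ h _ hv
        · rw [List.mem_cons] at h
          rcases h with rfl | h
          · exact hsub (hvs _ hv)
          · exact hwf'r _ h _ hv
      · intro u hu
        have e1 : runScr G W' γ (blockScr γ D₀ τ₀ ++ (((a, b), vs) :: sc'r))
            = runScr G W' γ₂ sc'r := by
          rw [runScr_append, hblk]
          rfl
        rw [e1]
        have e2 : runScr G W' γ₂ sc'r u = runScr G W'' γ₂ rest u := hagr u hu
        have e3 : ∀ x ∈ W'', γ₂ x = runPhase G W'' γ (a, b) vs x := by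
          intro x hx
          rw [hγ₂]
          calc runPhase G W' γ₁ (a, b) vs x
              = runPhase G W'' γ₁ (a, b) vs x := hagree x hx
            _ = runPhase G W'' γ (a, b) vs x := runPhase_congr_on vs hγ₁W'' x hx
        have e4 : runScr G W'' γ₂ rest u
            = runScr G W'' (runPhase G W'' γ (a, b) vs) rest u :=
          runScr_congr_on rest e3 u hu
        rw [e2, e4]
        rfl
      · rw [List.length_append, List.length_cons, block_len, List.length_cons]
        calc k * k + (sc'r.length + 1) ≤ k * k + ((k * k + 1) * rest.length + 1) := by omega
          _ = (k * k + 1) * (rest.length + 1) := by ring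
      · rw [steps_append, steps_cons, steps_cons, List.length_cons]
        have hcard : D₀.card ≤ (W' \ W'').card := Finset.card_le_card hD₀sub
        have hbs : steps (blockScr γ D₀ τ₀) ≤ D₀.card := block_steps
        have h5 : steps sc'r ≤ steps rest + rest.length * (W' \ W'').card := hsteps'r
        have h6 : (rest.length + 1) * (W' \ W'').card
            = rest.length * (W' \ W'').card + (W' \ W'').card := by ring
        omega

end LiftAll

section Counting

lemma greedy_indep : ∀ (N : ℕ) (L : Finset V), L.card ≤ N →
    (∀ x ∈ L, (L.filter fun u => G.Adj x u).card + 1 ≤ k) →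
    ∃ S : Finset V, S ⊆ L ∧ (∀ s ∈ S, ∀ t ∈ S, ¬G.Adj s t) ∧
      L.card ≤ k * S.card ∧ (L.Nonempty → S.Nonempty) := by
  intro N
  induction N with
  | zero =>
      intro L hL _
      have : L = ∅ := Finset.card_eq_zero.mp (Nat.le_zero.mp hL)
      subst this
      exact ⟨∅, Finset.Subset.refl _, by simp, by simp, by simp⟩
  | succ N ih =>
      intro L hL hdeg
      rcases Finset.eq_empty_or_nonempty L with rfl | hne
      · exact ⟨∅, Finset.Subset.refl _, by simp, by simp, by simp⟩
      · obtain ⟨x, hx⟩ := hne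
        set X := insert x (L.filter fun u => G.Adj x u) with hX
        set L' := L \ X with hL'
        have hxX : x ∈ X := Finset.mem_insert_self _ _
        have hxL' : x ∉ L' := fun h => (Finset.mem_sdiff.mp h).2 hxX
        have hL'ss : L' ⊆ L := Finset.sdiff_subset
        have hL'card : L'.card < L.card :=
          Finset.card_lt_card (Finset.ssubset_iff_of_subset hL'ss |>.mpr ⟨x, hx, hxL'⟩)
        have hdeg' : ∀ y ∈ L', (L'.filter fun u => G.Adj y u).card + 1 ≤ k := by
          intro y hy
          calc (L'.filter fun u => G.Adj y u).card + 1
              ≤ (L.filter fun u => G.Adj y u).card + 1 := by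
                have := Finset.card_le_card (Finset.filter_subset_filter
                  (fun u => G.Adj y u) hL'ss)
                omega
            _ ≤ k := hdeg y (hL'ss hy)
        obtain ⟨S', hS'L', hindep', hcard', _⟩ := ih L' (by omega) hdeg'
        have hxS' : x ∉ S' := fun h => hxL' (hS'L' h)
        refine ⟨insert x S', ?_, ?_, ?_, fun _ => ⟨x, Finset.mem_insert_self _ _⟩⟩
        · intro y hy
          rcases Finset.mem_insert.mp hy with rfl | hy'
          · exact hx
          · exact hL'ss (hS'L' hy')
        · intro s hs t ht
          rcases Finset.mem_insert.mp hs with rfl | hs' <;>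
            rcases Finset.mem_insert.mp ht with rfl | ht'
          · exact fun h => G.irrefl h
          · intro hadj
            have htL' : t ∈ L' := hS'L' ht'
            have htX : t ∈ X := Finset.mem_insert.mpr (Or.inr (Finset.mem_filter.mpr
              ⟨(Finset.mem_sdiff.mp htL').1, hadj⟩))
            exact (Finset.mem_sdiff.mp htL').2 htX
          · intro hadj
            have : s ∈ X := Finset.mem_insert.mpr (Or.inr (Finset.mem_filter.mpr
              ⟨(Finset.mem_sdiff.mp (hS'L' hs')).1, hadj.symm⟩))
            exact (Finset.mem_sdiff.mp (hS'L' hs')).2 this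
          · exact hindep' s hs' t ht'
        · have h1 : L.card ≤ L'.card + X.card := Finset.card_le_card_sdiff_add_card
          have h2 : X.card ≤ k := by
            calc X.card ≤ (L.filter fun u => G.Adj x u).card + 1 := Finset.card_insert_le _ _
              _ ≤ k := hdeg x hx
          rw [Finset.card_insert_of_notMem hxS']
          calc L.card ≤ L'.card + X.card := h1
            _ ≤ k * S'.card + k := by omega
            _ = k * (S'.card + 1) := by ring

lemma lowdeg_exists {ε : ℝ} (hε : 0 < ε) (hk : 1 ≤ k)
    (hyp : ∀ W : Finset V, W.Nonempty →
      (∑ v ∈ W, ((W.filter fun u => G.Adj v u).card : ℝ)) ≤ ((k : ℝ) - ε) * W.card)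
    (W : Finset V) (hW : W.Nonempty) :
    ∃ S : Finset V, S ⊆ W ∧ S.Nonempty ∧ (∀ s ∈ S, ∀ t ∈ S, ¬G.Adj s t) ∧
      (∀ s ∈ S, (W.filter fun u => G.Adj s u).card + 1 ≤ k) ∧
      ε * W.card ≤ (k : ℝ) * k * S.card := by
  set L := W.filter fun v => (W.filter fun u => G.Adj v u).card + 1 ≤ k with hLdef
  have hLW : L ⊆ W := Finset.filter_subset _ _
  have hL : ε * W.card ≤ (k : ℝ) * L.card := by
    have hsplit : ∑ v ∈ W \ L, ((W.filter fun u => G.Adj v u).card : ℝ)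
        ≤ ∑ v ∈ W, ((W.filter fun u => G.Adj v u).card : ℝ) := by
      apply Finset.sum_le_sum_of_subset_of_nonneg Finset.sdiff_subset
      intro v _ _
      positivity
    have hlow : (k : ℝ) * ((W \ L).card) ≤ ∑ v ∈ W \ L, ((W.filter fun u => G.Adj v u).card : ℝ) := by
      rw [show (k : ℝ) * ((W \ L).card) = ∑ _v ∈ W \ L, (k : ℝ) by
        rw [Finset.sum_const, nsmul_eq_mul, mul_comm]]
      apply Finset.sum_le_sum
      intro v hv
      have hv' := hv
      rw [Finset.mem_sdiff] at hv'
      have : ¬((W.filter fun u => G.Adj v u).card + 1 ≤ k) := by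
        intro hcon
        exact hv'.2 (Finset.mem_filter.mpr ⟨hv'.1, hcon⟩)
      have : k ≤ (W.filter fun u => G.Adj v u).card := by omega
      exact_mod_cast this
    have hcard : ((W \ L).card : ℝ) = (W.card : ℝ) - L.card := by
      rw [Finset.card_sdiff_of_subset hLW]
      have := Finset.card_le_card hLW
      push_cast [Nat.cast_sub this]
      ring
    have := hyp W hW
    rw [hcard] at hlow
    nlinarith [hsplit, hlow, this]
  have hdegL : ∀ x ∈ L, (L.filter fun u => G.Adj x u).card + 1 ≤ k := by
    intro x hxL
    have hx := Finset.mem_filter.mp hxL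
    calc (L.filter fun u => G.Adj x u).card + 1
        ≤ (W.filter fun u => G.Adj x u).card + 1 := by
          have := Finset.card_le_card (Finset.filter_subset_filter (fun u => G.Adj x u) hLW)
          omega
      _ ≤ k := hx.2
  obtain ⟨S, hSL, hindep, hcardLS, hSne⟩ := greedy_indep L.card L le_rfl hdegL
  have hLne : L.Nonempty := by
    rw [← Finset.card_pos]
    by_contra hcon
    push_neg at hcon
    have hL0 : L.card = 0 := by omega
    rw [hL0] at hL
    simp at hL
    have hWpos : (0:ℝ) < W.card := by
      have := Finset.card_pos.mpr hW
      exact_mod_cast this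
    nlinarith
  refine ⟨S, hSL.trans hLW, hSne hLne, hindep,
    fun s hs => (Finset.mem_filter.mp (hSL hs)).2, ?_⟩
  calc ε * W.card ≤ (k : ℝ) * L.card := hL
    _ ≤ (k : ℝ) * (k * S.card) := by
        have : (L.card : ℝ) ≤ (k : ℝ) * S.card := by exact_mod_cast hcardLS
        have hk0 : (0:ℝ) ≤ (k:ℝ) := by positivity
        nlinarith
    _ = (k : ℝ) * k * S.card := by ring

end Counting

section Numeric

lemma num_shrink {k : ℕ} (hk : 1 ≤ k) {ε : ℝ} (hε : 0 < ε) {m s₀ : ℕ}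
    (hm : 1 ≤ m) (hsm : s₀ ≤ m) (hεm : ε * m ≤ (k : ℝ) * k * s₀) :
    ((m - s₀ : ℕ) : ℝ) + 1 ≤ (1 - (min (ε / ((k : ℝ) * k)) 1) / 2) * ((m : ℝ) + 1) := by
  set δ := min (ε / ((k : ℝ) * k)) 1 with hδ
  have hk0 : (0 : ℝ) < (k : ℝ) * k := by
    have : (1 : ℝ) ≤ (k : ℝ) := by exact_mod_cast hk
    nlinarith
  have hδ0 : 0 < δ := lt_min (by positivity) one_pos
  have hδ1 : δ ≤ 1 := min_le_right _ _
  have hδm : δ * m ≤ (s₀ : ℝ) := by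
    have h1 : δ ≤ ε / ((k : ℝ) * k) := min_le_left _ _
    have hm0 : (0 : ℝ) ≤ (m : ℝ) := by positivity
    have h2 : δ * m ≤ (ε / ((k : ℝ) * k)) * m := mul_le_mul_of_nonneg_right h1 hm0
    have h3 : (ε / ((k : ℝ) * k)) * m ≤ s₀ := by
      rw [div_mul_eq_mul_div, div_le_iff₀ hk0]
      nlinarith
    linarith
  have hcast : ((m - s₀ : ℕ) : ℝ) = (m : ℝ) - s₀ := by
    push_cast [Nat.cast_sub hsm]; ring
  rw [hcast]
  have hm1 : (1 : ℝ) ≤ (m : ℝ) := by exact_mod_cast hm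
  nlinarith [hδm, hδ0.le, hδ1, hm1]

lemma num_len {k : ℕ} (hk : 1 ≤ k) (d₁ : ℕ) {ρ : ℝ} (hρ0 : 0 ≤ ρ)
    (hd₁ : ((k : ℝ) * k + 1) * ρ ^ d₁ ≤ 1 / 2) {m' m : ℕ} {L : ℝ}
    (hL : L ≤ 2 * (k : ℝ) * k * ((m' : ℝ) + 1) ^ d₁)
    (hshrink : ((m' : ℝ) + 1) ≤ ρ * ((m : ℝ) + 1)) :
    ((k : ℝ) * k + 1) * L + (k : ℝ) * k ≤ 2 * (k : ℝ) * k * ((m : ℝ) + 1) ^ d₁ := by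
  have hk1 : (1 : ℝ) ≤ (k : ℝ) := by exact_mod_cast hk
  have hQ0 : (0 : ℝ) ≤ 2 * (k : ℝ) * k := by positivity
  have h1 : ((m' : ℝ) + 1) ^ d₁ ≤ (ρ * ((m : ℝ) + 1)) ^ d₁ :=
    pow_le_pow_left₀ (by positivity) hshrink d₁
  have h2 : (ρ * ((m : ℝ) + 1)) ^ d₁ = ρ ^ d₁ * ((m : ℝ) + 1) ^ d₁ := mul_pow _ _ _
  have hxp1 : (1 : ℝ) ≤ ((m : ℝ) + 1) ^ d₁ := by
    calc (1:ℝ) = 1 ^ d₁ := (one_pow d₁).symm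
      _ ≤ ((m : ℝ) + 1) ^ d₁ := pow_le_pow_left₀ one_pos.le (le_add_of_nonneg_left (Nat.cast_nonneg m)) d₁

  have h3 : ((k : ℝ) * k + 1) * L ≤ ((k : ℝ) * k + 1) * (2 * (k : ℝ) * k * ((m' : ℝ) + 1) ^ d₁) :=
    mul_le_mul_of_nonneg_left hL (by positivity)
  have h4 : ((k : ℝ) * k + 1) * (2 * (k : ℝ) * k * ((m' : ℝ) + 1) ^ d₁)
      ≤ ((k : ℝ) * k + 1) * (2 * (k : ℝ) * k * (ρ ^ d₁ * ((m : ℝ) + 1) ^ d₁)) := by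
    apply mul_le_mul_of_nonneg_left _ (by positivity)
    apply mul_le_mul_of_nonneg_left _ hQ0
    rw [← h2]
    exact h1
  have h5 : ((k : ℝ) * k + 1) * (2 * (k : ℝ) * k * (ρ ^ d₁ * ((m : ℝ) + 1) ^ d₁))
      = 2 * (k : ℝ) * k * (((k : ℝ) * k + 1) * ρ ^ d₁) * ((m : ℝ) + 1) ^ d₁ := by ring
  have h6 : 2 * (k : ℝ) * k * (((k : ℝ) * k + 1) * ρ ^ d₁) * ((m : ℝ) + 1) ^ d₁
      ≤ 2 * (k : ℝ) * k * (1 / 2) * ((m : ℝ) + 1) ^ d₁ := by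
    apply mul_le_mul_of_nonneg_right _ (by positivity)
    exact mul_le_mul_of_nonneg_left hd₁ hQ0
  have h7 : (k : ℝ) * k ≤ (k : ℝ) * k * ((m : ℝ) + 1) ^ d₁ := by
    nlinarith [hxp1]
  nlinarith [h3, h4, h5, h6, h7]

lemma num_steps {T L X X' s₀ m' m : ℝ} (h1 : T ≤ m' * (X' + 1)) (h2 : L ≤ X')
    (h3 : X' ≤ X) (h4 : m' + s₀ = m) (hs : 0 ≤ s₀) (hm' : 0 ≤ m') :
    T + L * s₀ + s₀ ≤ m * (X + 1) := by
  have hm : 0 ≤ m := by linarith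
  have e1 : L * s₀ ≤ X' * s₀ := mul_le_mul_of_nonneg_right h2 hs
  have e2 : m * X' ≤ m * X := mul_le_mul_of_nonneg_left h3 hm
  have e3 : m' * X' + s₀ * X' = m * X' := by rw [← h4]; ring
  nlinarith [e1, e2, e3]

end Numeric

section Main

lemma properOn_mono {W'' W : Finset V} {γ : V → Fin k} (h : W'' ⊆ W)
    (hp : ProperOn G W γ) : ProperOn G W'' γ :=
  fun _ hu _ hw hadj => hp (h hu) (h hw) hadj

lemma main {ε : ℝ} (hε : 0 < ε) (hk : 1 ≤ k)
    (hyp : ∀ W : Finset V, W.Nonempty →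
      (∑ v ∈ W, ((W.filter fun u => G.Adj v u).card : ℝ)) ≤ ((k : ℝ) - ε) * W.card)
    (d₁ : ℕ) (hd₁ : ((k : ℝ) * k + 1) * (1 - (min (ε / ((k : ℝ) * k)) 1) / 2) ^ d₁ ≤ 1 / 2) :
    ∀ (N : ℕ) (W : Finset V), W.card ≤ N → ∀ α β : V → Fin k,
      ProperOn G W α → ProperOn G W β →
      ∃ sc : Scr V k, SCwf W sc ∧ (∀ u ∈ W, runScr G W α sc u = β u) ∧
        ((sc.length : ℝ) ≤ 2 * (k : ℝ) * k * ((W.card : ℝ) + 1) ^ d₁) ∧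
        ((steps sc : ℝ) ≤ (W.card : ℝ) * (2 * (k : ℝ) * k * ((W.card : ℝ) + 1) ^ d₁ + 1)) := by
  intro N
  induction N with
  | zero =>
      intro W hW α β hα hβ
      have hWe : W = ∅ := Finset.card_eq_zero.mp (Nat.le_zero.mp hW)
      subst hWe
      refine ⟨[], fun ph hph => by simp at hph, fun u hu => by simp at hu, ?_, ?_⟩
      · simp only [List.length_nil, Nat.cast_zero]
        positivity
      · simp [steps]
  | succ N ih =>
      intro W hWN α β hα hβ
      rcases Finset.eq_empty_or_nonempty W with rfl | hWne
      · refine ⟨[], fun ph hph => by simp at hph, fun u hu => by simp at hu, ?_, ?_⟩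
        · simp only [List.length_nil, Nat.cast_zero]
          positivity
        · simp [steps]
      · obtain ⟨S, hSW, hSne, hSind, hSdeg, hScard⟩ := lowdeg_exists hε hk hyp W hWne
        set W'' := W \ S with hW''
        have hWS : W \ W'' = S := Finset.sdiff_sdiff_eq_self hSW
        have hsub : W'' ⊆ W := Finset.sdiff_subset
        have hind' : ∀ s ∈ W \ W'', ∀ t ∈ W \ W'', ¬G.Adj s t := by
          rw [hWS]; exact hSind
        have hdeg' : ∀ s ∈ W \ W'', (W.filter fun u => G.Adj s u).card + 1 ≤ k := by
          rw [hWS]; exact hSdeg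
        have hScard1 : 1 ≤ S.card := Finset.card_pos.mpr hSne
        have hsm : S.card ≤ W.card := Finset.card_le_card hSW
        have hm''eq : W''.card = W.card - S.card := Finset.card_sdiff_of_subset hSW
        have hm'' : W''.card ≤ N := by omega
        obtain ⟨sc'', hwf'', hag'', hlen'', hsteps''⟩ :=
          ih W'' hm'' α β (properOn_mono hsub hα) (properOn_mono hsub hβ)
        obtain ⟨sc₁, hwf₁, hag₁, hlen₁, hsteps₁⟩ :=
          liftAll hsub hind' hdeg' sc'' hwf'' α hα
        set γs := runScr G W α sc₁ with hγs
        have hpγs : ProperOn G W γs := runScr_proper _ _ hα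
        set D := (W \ W'').filter fun s => γs s ≠ β s with hD
        have hDsub : D ⊆ W \ W'' := Finset.filter_subset _ _
        have hfree : ∀ s ∈ D, ∀ u ∈ W, G.Adj s u → γs u ≠ β s := by
          intro s hs u hu hadj
          have hsWW : s ∈ W \ W'' := hDsub hs
          by_cases hu'' : u ∈ W''
          · rw [hag₁ u hu'', hag'' u hu'']
            have hsW : s ∈ W := (Finset.mem_sdiff.mp hsWW).1
            exact (hβ hsW hu hadj).symm
          · exact absurd hadj (hind' s hsWW u (Finset.mem_sdiff.mpr ⟨hu, hu''⟩))
        have hblock : runScr G W γs (blockScr γs D β) = patch γs β D :=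
          block_run Finset.sdiff_subset hind' hpγs hDsub hfree
        refine ⟨sc₁ ++ blockScr γs D β, ?_, ?_, ?_, ?_⟩
        · intro ph hph v hv
          rcases List.mem_append.mp hph with h | h
          · exact hwf₁ ph h v hv
          · exact block_wf (hDsub.trans Finset.sdiff_subset) ph h v hv
        · intro u hu
          have e0 : runScr G W α (sc₁ ++ blockScr γs D β) u = patch γs β D u := by
            rw [runScr_append, ← hγs, hblock]
          rw [e0]
          by_cases hu'' : u ∈ W''
          · have huD : u ∉ D := by
              intro huD
              exact (Finset.mem_sdiff.mp (hDsub huD)).2 hu''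
            have : patch γs β D u = γs u := by simp only [patch]; rw [if_neg huD]
            rw [this, hag₁ u hu'', hag'' u hu'']
          · by_cases hne : γs u = β u
            · have huD : u ∉ D := by
                intro huD
                exact (Finset.mem_filter.mp huD).2 hne
              have : patch γs β D u = γs u := by simp only [patch]; rw [if_neg huD]
              rw [this, hne]
            · have huD : u ∈ D := Finset.mem_filter.mpr
                ⟨Finset.mem_sdiff.mpr ⟨hu, hu''⟩, hne⟩
              simp only [patch]; rw [if_pos huD]
        · -- length bound
          have hm1 : 1 ≤ W.card := Finset.card_pos.mpr hWne
          have hshrink := num_shrink hk hε hm1 hsm hScard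
          rw [← hm''eq] at hshrink
          have hρ0 : (0:ℝ) ≤ 1 - (min (ε / ((k : ℝ) * k)) 1) / 2 := by
            have : min (ε / ((k : ℝ) * k)) 1 ≤ 1 := min_le_right _ _
            linarith
          have hcast : ((sc₁ ++ blockScr γs D β).length : ℝ)
              ≤ ((k : ℝ) * k + 1) * (sc''.length : ℝ) + (k : ℝ) * k := by
            rw [List.length_append, block_len]
            push_cast
            have : (sc₁.length : ℝ) ≤ ((k : ℝ) * k + 1) * (sc''.length : ℝ) := by
              exact_mod_cast hlen₁
            linarith
          calc ((sc₁ ++ blockScr γs D β).length : ℝ)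
              ≤ ((k : ℝ) * k + 1) * (sc''.length : ℝ) + (k : ℝ) * k := hcast
            _ ≤ 2 * (k : ℝ) * k * ((W.card : ℝ) + 1) ^ d₁ :=
              num_len hk d₁ hρ0 hd₁ hlen'' hshrink
        · -- steps bound
          have hDcard : (D.card : ℝ) ≤ (S.card : ℝ) := by
            have hDS : D ⊆ S := by rw [← hWS]; exact hDsub
            have := Finset.card_le_card hDS
            exact_mod_cast this
          have hstepsum : (steps (sc₁ ++ blockScr γs D β) : ℝ)
              ≤ (steps sc'' : ℝ) + (sc''.length : ℝ) * (S.card : ℝ) + (S.card : ℝ) := by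
            rw [steps_append]
            push_cast
            have h1 : (steps sc₁ : ℝ) ≤ (steps sc'' : ℝ) + (sc''.length : ℝ) * ((W \ W'').card : ℝ) := by
              exact_mod_cast hsteps₁
            have h2 : (steps (blockScr γs D β) : ℝ) ≤ (D.card : ℝ) := by
              exact_mod_cast (block_steps (γ₀ := γs) (D := D) (τ := β))
            rw [hWS] at h1
            linarith
          have hmono : 2 * (k : ℝ) * k * ((W''.card : ℝ) + 1) ^ d₁
              ≤ 2 * (k : ℝ) * k * ((W.card : ℝ) + 1) ^ d₁ := by
            apply mul_le_mul_of_nonneg_left _ (by positivity)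
            apply pow_le_pow_left₀ (by positivity)
            have : (W''.card : ℝ) ≤ (W.card : ℝ) := by
              exact_mod_cast Finset.card_le_card hsub
            linarith
          have hsum : (W''.card : ℝ) + (S.card : ℝ) = (W.card : ℝ) := by
            have : W''.card + S.card = W.card := by omega
            exact_mod_cast this
          calc (steps (sc₁ ++ blockScr γs D β) : ℝ)
              ≤ (steps sc'' : ℝ) + (sc''.length : ℝ) * (S.card : ℝ) + (S.card : ℝ) := hstepsum
            _ ≤ (W.card : ℝ) * (2 * (k : ℝ) * k * ((W.card : ℝ) + 1) ^ d₁ + 1) :=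
              num_steps hsteps'' hlen'' hmono hsum (by positivity) (by positivity)

end Main

section Convert

variable {W : Finset V}

noncomputable def runMoves (G : SimpleGraph V) (W : Finset V) (γ : V → Fin k)
    (l : List ((Fin k × Fin k) × V)) : V → Fin k :=
  l.foldl (fun γ mv => flip G W γ mv.1.1 mv.1.2 mv.2) γ

def moves (sc : Scr V k) : List ((Fin k × Fin k) × V) :=
  sc.flatMap fun ph => ph.2.map fun v => (ph.1, v)

lemma runScr_eq_runMoves (sc : Scr V k) : ∀ γ : V → Fin k,
    runScr G W γ sc = runMoves G W γ (moves sc) := by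
  induction sc with
  | nil => intro γ; rfl
  | cons ph tl ih =>
      intro γ
      have h1 : moves (ph :: tl) = (ph.2.map fun v => (ph.1, v)) ++ moves tl := by
        simp [moves]
      rw [h1]
      have h2 : runMoves G W γ ((ph.2.map fun v => (ph.1, v)) ++ moves tl)
          = runMoves G W (runMoves G W γ (ph.2.map fun v => (ph.1, v))) (moves tl) := by
        simp [runMoves, List.foldl_append]
      rw [h2]
      have h3 : runMoves G W γ (ph.2.map fun v => (ph.1, v)) = runPhase G W γ ph.1 ph.2 := by
        rw [runMoves, List.foldl_map]; rfl
      rw [h3, ← ih]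
      rfl

lemma moves_length (sc : Scr V k) : (moves sc).length = steps sc := by
  induction sc with
  | nil => rfl
  | cons ph tl ih =>
      simp only [moves, List.flatMap_cons, List.length_append, List.length_map, steps,
        List.map_cons, List.sum_cons]
      simp only [moves, steps] at ih
      omega

lemma properOn_univ {γ : V → Fin k} :
    ProperOn G Finset.univ γ ↔ IsProperColoring G γ := by
  constructor
  · exact fun hp u v hadj => hp (Finset.mem_univ u) (Finset.mem_univ v) hadj
  · exact fun h u _ v _ hadj => h hadj

lemma chain_univ {γ : V → Fin k} {a b : Fin k} {v u : V} :
    Chain G Finset.univ γ a b v u ↔ InKempeChain G γ a b v u := by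
  simp only [Chain, InKempeChain, Finset.coe_univ]

lemma kempe_mono {P : (V → Fin k) → Prop} {N N' : ℕ} {α β : V → Fin k}
    (h : N ≤ N') (hK : KempeEquivIn G P N α β) : KempeEquivIn G P N' α β := by
  obtain ⟨m, f, hm, h0, hend, hP, hsteps⟩ := hK
  exact ⟨m, f, hm.trans h, h0, hend, hP, hsteps⟩

lemma kempe_prepend {P : (V → Fin k) → Prop} {N : ℕ} {γ γ₁ β : V → Fin k}
    (hstep : KempeStep G γ γ₁) (hPγ : P γ) (h : KempeEquivIn G P N γ₁ β) :
    KempeEquivIn G P (N + 1) γ β := by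
  obtain ⟨m, f, hm, h0, hend, hP, hsteps⟩ := h
  refine ⟨m + 1, fun i => if i = 0 then γ else f (i - 1), by omega, by simp, ?_, ?_, ?_⟩
  · simp only [Nat.succ_ne_zero, if_false, Nat.add_sub_cancel]
    exact hend
  · intro i hi
    rcases Nat.eq_zero_or_pos i with rfl | hipos
    · simpa using hPγ
    · have : ¬(i = 0) := by omega
      simp only [this, if_false]
      exact hP (i - 1) (by omega)
  · intro i hi
    rcases Nat.eq_zero_or_pos i with rfl | hipos
    · simp only [if_pos rfl, Nat.zero_add, Nat.one_ne_zero, if_false]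
      show KempeStep G γ (f (1 - 1))
      rw [show (1 : ℕ) - 1 = 0 from rfl, h0]
      exact hstep
    · have h1 : ¬(i = 0) := by omega
      have h2 : ¬(i + 1 = 0) := by omega
      simp only [h1, h2, if_false]
      have : i - 1 + 1 = i + 1 - 1 := by omega
      rw [show i + 1 - 1 = (i - 1) + 1 by omega]
      exact hsteps (i - 1) (by omega)

lemma toKempe : ∀ (l : List ((Fin k × Fin k) × V)) (γ : V → Fin k),
    IsProperColoring G γ →
    KempeEquivIn G (IsProperColoring G) l.length γ (runMoves G Finset.univ γ l) := by
  intro l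
  induction l with
  | nil =>
      intro γ hγ
      refine ⟨0, fun _ => γ, le_refl _, rfl, rfl, ?_, ?_⟩
      · intro i hi; exact hγ
      · intro i hi; omega
  | cons mv tl ih =>
      intro γ hγ
      have hrm : runMoves G Finset.univ γ (mv :: tl)
          = runMoves G Finset.univ (flip G Finset.univ γ mv.1.1 mv.1.2 mv.2) tl := rfl
      by_cases hg : mv.2 ∈ Finset.univ ∧ (γ mv.2 = mv.1.1 ∨ γ mv.2 = mv.1.2)
      · have hγ₁ : IsProperColoring G (flip G Finset.univ γ mv.1.1 mv.1.2 mv.2) :=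
          properOn_univ.mp (flip_proper (properOn_univ.mpr hγ))
        have hstep : KempeStep G γ (flip G Finset.univ γ mv.1.1 mv.1.2 mv.2) := by
          refine ⟨mv.1.1, mv.1.2, mv.2, hg.2, ?_, ?_⟩
          · intro u hu
            exact flip_eq_of_chain hg (chain_univ.mpr hu)
          · intro u hu
            exact flip_eq_of_not_chain (fun hc => hu (chain_univ.mp hc))
        rw [hrm]
        exact kempe_prepend hstep hγ (ih _ hγ₁)
      · have hid : flip G Finset.univ γ mv.1.1 mv.1.2 mv.2 = γ := flip_of_neg hg
        rw [hrm, hid]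
        exact kempe_mono (by simp) (ih γ hγ)

lemma pairs_card (W : Finset V) :
    {p : V × V | p.1 ∈ (↑W : Set V) ∧ p.2 ∈ (↑W : Set V) ∧ G.Adj p.1 p.2}.ncard
      = ∑ v ∈ W, (W.filter fun u => G.Adj v u).card := by
  have hset : {p : V × V | p.1 ∈ (↑W : Set V) ∧ p.2 ∈ (↑W : Set V) ∧ G.Adj p.1 p.2}
      = ↑((W ×ˢ W).filter fun p => G.Adj p.1 p.2) := by
    ext p
    simp only [Set.mem_setOf_eq, Finset.coe_filter, Finset.mem_product, Finset.mem_coe,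
      Set.mem_setOf_eq]
    tauto
  rw [hset, Set.ncard_coe_finset]
  rw [Finset.card_eq_sum_card_fiberwise
    (f := Prod.fst) (t := W)
    (fun p hp => (Finset.mem_product.mp (Finset.mem_filter.mp hp).1).1)]
  apply Finset.sum_congr rfl
  intro v hv
  apply Finset.card_bij (fun p _ => p.2)
  · intro p hp
    rw [Finset.mem_filter, Finset.mem_filter, Finset.mem_product] at hp
    rw [Finset.mem_filter]
    refine ⟨hp.1.1.2, ?_⟩
    rw [← hp.2]
    exact hp.1.2
  · intro p hp q hq hpq
    rw [Finset.mem_filter] at hp hq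
    exact Prod.ext (hp.2.trans hq.2.symm) hpq
  · intro u hu
    rw [Finset.mem_filter] at hu
    refine ⟨(v, u), ?_, rfl⟩
    rw [Finset.mem_filter, Finset.mem_filter, Finset.mem_product]
    exact ⟨⟨⟨hv, hu.1⟩, hu.2⟩, rfl⟩

end Convert

end KempeWork

section Final

attribute [local instance 10] Classical.propDecidable

open KempeWork

theorem statement_1 (k : ℕ) (hk : 1 ≤ k) (ε : ℝ) (hε : 0 < ε) :
    ∃ C d : ℕ, ∀ (n : ℕ) (G : SimpleGraph (Fin n)),
      (∀ s : Set (Fin n), s.Nonempty →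
        ({p : Fin n × Fin n | p.1 ∈ s ∧ p.2 ∈ s ∧ G.Adj p.1 p.2}.ncard : ℝ) ≤
          ((k : ℝ) - ε) * s.ncard) →
      ∀ α β : Fin n → Fin k, IsProperColoring G α → IsProperColoring G β →
        KempeEquivIn G (IsProperColoring G) (C * n ^ d) α β := by
  have hk1 : (1 : ℝ) ≤ (k : ℝ) := by exact_mod_cast hk
  set δ := min (ε / ((k : ℝ) * k)) 1 with hδdef
  have hδ0 : 0 < δ := lt_min (by positivity) one_pos
  have hδ1 : δ ≤ 1 := min_le_right _ _
  set ρ := 1 - δ / 2 with hρdef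
  have hρ0 : 0 ≤ ρ := by rw [hρdef]; linarith
  have hρ1 : ρ < 1 := by rw [hρdef]; linarith
  have hkk1 : (0 : ℝ) < (k : ℝ) * k + 1 := by positivity
  obtain ⟨d₁, hd₁'⟩ := exists_pow_lt_of_lt_one
    (x := 1 / (2 * ((k : ℝ) * k + 1))) (by positivity) hρ1
  have hd₁ : ((k : ℝ) * k + 1) * ρ ^ d₁ ≤ 1 / 2 := by
    calc ((k : ℝ) * k + 1) * ρ ^ d₁
        ≤ ((k : ℝ) * k + 1) * (1 / (2 * ((k : ℝ) * k + 1))) :=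
          mul_le_mul_of_nonneg_left hd₁'.le hkk1.le
      _ = 1 / 2 := by field_simp
  refine ⟨2 * k * k * 2 ^ d₁ + 1, d₁ + 1, ?_⟩
  intro n G hmad α β hα hβ
  rcases Nat.eq_zero_or_pos n with rfl | hn
  · have hαβ : α = β := funext fun v => v.elim0
    refine ⟨0, fun _ => α, Nat.zero_le _, rfl, by rw [hαβ], ?_, ?_⟩
    · intro i _; exact hα
    · intro i hi; omega
  · have hyp : ∀ W : Finset (Fin n), W.Nonempty →
        (∑ v ∈ W, ((W.filter fun u => G.Adj v u).card : ℝ)) ≤ ((k : ℝ) - ε) * W.card := by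
      intro W hW
      have h0 := hmad ↑W (by exact_mod_cast Finset.coe_nonempty.mpr hW)
      rw [pairs_card (G := G) W, Set.ncard_coe_finset] at h0
      rw [Nat.cast_sum] at h0
      exact h0
    have hα' : ProperOn G Finset.univ α := properOn_univ.mpr hα
    have hβ' : ProperOn G Finset.univ β := properOn_univ.mpr hβ
    have hcard : (Finset.univ : Finset (Fin n)).card = n := by simp
    obtain ⟨sc, hwf, hag, hlen, hsteps⟩ :=
      main hε hk hyp d₁ hd₁ n Finset.univ (le_of_eq hcard) α β hα' hβ'
    have hrun : runScr G Finset.univ α sc = β := funext fun u => hag u (Finset.mem_univ u)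
    have hK := toKempe (G := G) (moves sc) α hα
    rw [← runScr_eq_runMoves, hrun, moves_length] at hK
    refine kempe_mono ?_ hK
    rw [hcard] at hsteps
    -- real to nat bound
    have hn1 : (1 : ℝ) ≤ (n : ℝ) := by exact_mod_cast hn
    have hpow : ((n : ℝ) + 1) ^ d₁ ≤ 2 ^ d₁ * (n : ℝ) ^ d₁ := by
      calc ((n : ℝ) + 1) ^ d₁ ≤ (2 * (n : ℝ)) ^ d₁ :=
            pow_le_pow_left₀ (by positivity) (by linarith) d₁
        _ = 2 ^ d₁ * (n : ℝ) ^ d₁ := mul_pow _ _ _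
    have hnpow : (n : ℝ) ≤ (n : ℝ) ^ (d₁ + 1) := by
      calc (n : ℝ) = (n : ℝ) ^ 1 := (pow_one _).symm
        _ ≤ (n : ℝ) ^ (d₁ + 1) := pow_le_pow_right₀ hn1 (by omega)
    have hfinal : (steps sc : ℝ) ≤ ((2 * k * k * 2 ^ d₁ + 1 : ℕ) : ℝ) * (n : ℝ) ^ (d₁ + 1) := by
      have h1 : (steps sc : ℝ) ≤ (n : ℝ) * (2 * (k : ℝ) * k * ((n : ℝ) + 1) ^ d₁ + 1) := hsteps
      have h2 : (n : ℝ) * (2 * (k : ℝ) * k * ((n : ℝ) + 1) ^ d₁ + 1)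
          = 2 * (k : ℝ) * k * (((n : ℝ) + 1) ^ d₁ * (n : ℝ)) + (n : ℝ) := by ring
      have h3 : ((n : ℝ) + 1) ^ d₁ * (n : ℝ) ≤ (2 ^ d₁ * (n : ℝ) ^ d₁) * (n : ℝ) :=
        mul_le_mul_of_nonneg_right hpow (by positivity)
      have h4 : (2 ^ d₁ * (n : ℝ) ^ d₁) * (n : ℝ) = 2 ^ d₁ * (n : ℝ) ^ (d₁ + 1) := by ring
      have h5 : 2 * (k : ℝ) * k * (((n : ℝ) + 1) ^ d₁ * (n : ℝ))
          ≤ 2 * (k : ℝ) * k * (2 ^ d₁ * (n : ℝ) ^ (d₁ + 1)) := by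
        rw [← h4]
        exact mul_le_mul_of_nonneg_left h3 (by positivity)
      push_cast
      nlinarith [h1, h2, h5, hnpow]
    have : steps sc ≤ (2 * k * k * 2 ^ d₁ + 1) * n ^ (d₁ + 1) := by
      have hr : ((steps sc : ℕ) : ℝ) ≤ (((2 * k * k * 2 ^ d₁ + 1) * n ^ (d₁ + 1) : ℕ) : ℝ) := by
        push_cast
        push_cast at hfinal
        linarith
      exact_mod_cast hr
    exact this

end Final
end

section
/- Let d ≥ 1 and k ≥ d + 1 be integers and let G be a d-degenerate graph. Then any two k-colorings of G are Kempe equivalent, i.e., each can be transformed into the other by a finite sequence of Kempe changes. -/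
open SimpleGraph

namespace KempeAux

variable {V C : Type*}

def IsProperOn (G : SimpleGraph V) (S : Set V) (α : V → C) : Prop :=
  ∀ ⦃u v : V⦄, u ∈ S → v ∈ S → G.Adj u v → α u ≠ α v

lemma isProperOn_univ {G : SimpleGraph V} {α : V → C} (h : IsProperOn G Set.univ α) :
    IsProperColoring G α := fun u v huv => h (Set.mem_univ u) (Set.mem_univ v) huv

lemma IsProperOn.mono {G : SimpleGraph V} {S T : Set V} {α : V → C}
    (h : IsProperOn G T α) (hST : S ⊆ T) : IsProperOn G S α :=
  fun _ _ hu hv huv => h (hST hu) (hST hv) huv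

variable {G : SimpleGraph V}

lemma chain_mem {S : Set V} {α : V → C} {a b : C} {v u : V}
    (h : InKempeChainOn G S α a b v u) (hv : v ∈ S) : u ∈ S := by
  induction h with
  | refl => exact hv
  | tail _ h2 _ => exact h2.2.2.1

lemma chain_color {S : Set V} {α : V → C} {a b : C} {v u : V}
    (h : InKempeChainOn G S α a b v u) (hv : α v = a ∨ α v = b) :
    α u = a ∨ α u = b := by
  induction h with
  | refl => exact hv
  | tail _ h2 _ => exact h2.2.2.2.2

lemma chain_mono {S T : Set V} (hST : S ⊆ T) {α : V → C} {a b : C} {v u : V}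
    (h : InKempeChainOn G S α a b v u) : InKempeChainOn G T α a b v u :=
  Relation.ReflTransGen.mono (fun _ _ ⟨h1, h2, h3, h4, h5⟩ => ⟨h1, hST h2, hST h3, h4, h5⟩) _ _ h

lemma chain_congr {S : Set V} {α α' : V → C} (hS : ∀ x ∈ S, α x = α' x) {a b : C} {v u : V}
    (h : InKempeChainOn G S α a b v u) : InKempeChainOn G S α' a b v u := by
  refine Relation.ReflTransGen.mono (fun x y hxy => ?_) _ _ h
  obtain ⟨h1, h2, h3, h4, h5⟩ := hxy
  rw [hS x h2] at h4
  rw [hS y h3] at h5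
  exact ⟨h1, h2, h3, h4, h5⟩

lemma chain_singleton {S : Set V} {α : V → C} {a b : C} {v u : V}
    (hnb : ∀ u, u ∈ S → G.Adj v u → ¬(α u = a ∨ α u = b))
    (h : InKempeChainOn G S α a b v u) : u = v := by
  induction h with
  | refl => rfl
  | @tail x y h1 h2 ih =>
    rw [ih] at h2
    exact absurd h2.2.2.2.2 (hnb _ h2.2.2.1 h2.1)

lemma chain_of_not_mem_v {S : Set V} {v : V} {α : V → C} {a b : C} {w u : V}
    (hv : ¬ InKempeChainOn G S α a b w v)
    (h : InKempeChainOn G S α a b w u) : InKempeChainOn G (S \ {v}) α a b w u := by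
  induction h with
  | refl => exact .refl
  | @tail x y h1 h2 ih =>
    have hy : y ≠ v := fun hyv => hv (hyv ▸ h1.tail h2)
    have hx : x ≠ v := fun hxv => hv (hxv ▸ h1)
    exact ih.tail ⟨h2.1, ⟨h2.2.1, hx⟩, ⟨h2.2.2.1, hy⟩, h2.2.2.2⟩

lemma chain_through_v {S : Set V} {v : V} {α : V → C} {a b : C} {w u : V}
    (hproper : IsProperOn G S α) (hw : w ∈ S \ {v}) (hwc : α w = a ∨ α w = b)
    (hvc : α v = a ∨ α v = b) (hvS : v ∈ S)
    (hinj : Set.InjOn α (S ∩ G.neighborSet v)) (hab : a ≠ b)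
    (h : InKempeChainOn G S α a b w u) :
    u = v ∨ InKempeChainOn G (S \ {v}) α a b w u := by
  suffices h' : (u = v ∧ ∃ x, InKempeChainOn G (S \ {v}) α a b w x ∧ G.Adj x v ∧
      (α x = a ∨ α x = b)) ∨ InKempeChainOn G (S \ {v}) α a b w u by tauto
  induction h with
  | refl => exact Or.inr .refl
  | @tail x y h1 h2 ih =>
    rcases ih with ⟨hxv, x', hx', hadj', hcol'⟩ | hx
    · subst hxv
      have hyS : y ∈ S := h2.2.2.1
      have hadjy : G.Adj x y := h2.1
      have hx'S : x' ∈ S := (chain_mem hx' hw).1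
      have hyne : α y ≠ α x := (hproper hyS hvS hadjy.symm)
      have hx'ne : α x' ≠ α x := (hproper hx'S hvS hadj')
      have heq : α y = α x' := by
        rcases hvc with h' | h' <;> rcases h2.2.2.2.2 with h'' | h'' <;>
          rcases hcol' with h3 | h3 <;> simp_all
      have hyx' : y = x' :=
        hinj ⟨hyS, hadjy⟩ ⟨hx'S, hadj'.symm⟩ heq
      exact Or.inr (hyx' ▸ hx')
    · by_cases hyv : y = v
      · exact Or.inl ⟨hyv, x, hx, hyv ▸ h2.1, h2.2.2.2.1⟩
      · have hxv : x ≠ v := (chain_mem hx hw).2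
        exact Or.inr (hx.tail ⟨h2.1, ⟨h2.2.1, hxv⟩, ⟨h2.2.2.1, hyv⟩, h2.2.2.2⟩)

variable [DecidableEq C]

open Classical in
noncomputable def kswap (G : SimpleGraph V) (S : Set V) (α : V → C) (a b : C) (v : V) : V → C :=
  fun u => if InKempeChainOn G S α a b v u then Equiv.swap a b (α u) else α u

lemma kswap_of_mem {S : Set V} {α : V → C} {a b : C} {v u : V}
    (h : InKempeChainOn G S α a b v u) : kswap G S α a b v u = Equiv.swap a b (α u) := by
  simp [kswap, h]

lemma kswap_of_not_mem {S : Set V} {α : V → C} {a b : C} {v u : V}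
    (h : ¬InKempeChainOn G S α a b v u) : kswap G S α a b v u = α u := by
  simp [kswap, h]

lemma kswap_self {S : Set V} {α : V → C} {a b : C} {v : V} :
    kswap G S α a b v v = Equiv.swap a b (α v) :=
  kswap_of_mem Relation.ReflTransGen.refl

def KempeStepOn (G : SimpleGraph V) (S : Set V) (α β : V → C) : Prop :=
  ∃ (a b : C) (v : V), v ∈ S ∧ (α v = a ∨ α v = b) ∧
    (∀ u, InKempeChainOn G S α a b v u → β u = Equiv.swap a b (α u)) ∧
    (∀ u, ¬InKempeChainOn G S α a b v u → β u = α u)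

lemma kswap_step {S : Set V} {α : V → C} {a b : C} {v : V} (hv : v ∈ S)
    (hc : α v = a ∨ α v = b) : KempeStepOn G S α (kswap G S α a b v) :=
  ⟨a, b, v, hv, hc, fun _ h => kswap_of_mem h, fun _ h => kswap_of_not_mem h⟩

lemma KempeStepOn.off {S : Set V} {α β : V → C} (h : KempeStepOn G S α β) :
    ∀ u ∉ S, β u = α u := by
  obtain ⟨a, b, v, hv, _, _, h2⟩ := h
  exact fun u hu => h2 u (fun hch => hu (chain_mem hch hv))

lemma kswap_proper {S : Set V} {α : V → C} {a b : C} {v : V}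
    (hα : IsProperOn G S α) (hv : α v = a ∨ α v = b) :
    IsProperOn G S (kswap G S α a b v) := by
  intro u1 u2 h1 h2 hadj
  by_cases c1 : InKempeChainOn G S α a b v u1 <;>
    by_cases c2 : InKempeChainOn G S α a b v u2
  · rw [kswap_of_mem c1, kswap_of_mem c2]
    exact fun h => hα h1 h2 hadj ((Equiv.swap a b).injective h)
  · rw [kswap_of_mem c1, kswap_of_not_mem c2]
    have hc1 : α u1 = a ∨ α u1 = b := chain_color c1 hv
    have hc2 : ¬(α u2 = a ∨ α u2 = b) := fun hc2 =>
      c2 (c1.tail ⟨hadj, h1, h2, hc1, hc2⟩)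
    rcases hc1 with h | h <;> rw [h] <;>
      simp_all [Equiv.swap_apply_left, Equiv.swap_apply_right] <;> tauto
  · rw [kswap_of_not_mem c1, kswap_of_mem c2]
    have hc2 : α u2 = a ∨ α u2 = b := chain_color c2 hv
    have hc1 : ¬(α u1 = a ∨ α u1 = b) := fun hc1 =>
      c1 (c2.tail ⟨hadj.symm, h2, h1, hc2, hc1⟩)
    rcases hc2 with h | h <;> rw [h] <;>
      simp_all [Equiv.swap_apply_left, Equiv.swap_apply_right] <;> tauto
  · rw [kswap_of_not_mem c1, kswap_of_not_mem c2]
    exact hα h1 h2 hadj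

def KE (G : SimpleGraph V) (S : Set V) (α β : V → C) : Prop :=
  ∃ (m : ℕ) (f : ℕ → V → C), f 0 = α ∧ f m = β ∧ (∀ i ≤ m, IsProperOn G S (f i)) ∧
    ∀ i < m, KempeStepOn G S (f i) (f (i + 1))

lemma KE.refl {S : Set V} {α : V → C} (h : IsProperOn G S α) : KE G S α α :=
  ⟨0, fun _ => α, rfl, rfl, fun _ _ => h, fun i hi => absurd hi (Nat.not_lt_zero i)⟩

lemma KE.single {S : Set V} {α β : V → C} (hα : IsProperOn G S α) (hβ : IsProperOn G S β)
    (h : KempeStepOn G S α β) : KE G S α β := by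
  refine ⟨1, fun i => if i = 0 then α else β, by simp, by simp, ?_, ?_⟩
  · intro i _
    by_cases hi : i = 0 <;> simp [hi, hα, hβ]
  · intro i hi
    interval_cases i
    simpa using h

lemma KE.proper_right {S : Set V} {α β : V → C} (h : KE G S α β) : IsProperOn G S β := by
  obtain ⟨m, f, _, h2, h3, _⟩ := h
  exact h2 ▸ h3 m le_rfl

lemma KE.trans {S : Set V} {α β γ : V → C} (hab : KE G S α β) (hbc : KE G S β γ) :
    KE G S α γ := by
  obtain ⟨m1, f, hf0, hfm, hfp, hfs⟩ := hab
  obtain ⟨m2, g, hg0, hgm, hgp, hgs⟩ := hbc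
  refine ⟨m1 + m2, fun i => if i < m1 then f i else g (i - m1), ?_, ?_, ?_, ?_⟩
  · by_cases h : 0 < m1
    · simp only [h, if_pos, hf0]
    · have hm0 : m1 = 0 := by omega
      simp only [hm0, Nat.lt_irrefl, if_neg, Nat.sub_zero, not_false_iff, lt_self_iff_false,
        if_false]
      rw [hg0, ← hfm, hm0, hf0]
  · have : ¬ m1 + m2 < m1 := by omega
    simp [this, hgm]
  · intro i hi
    by_cases h : i < m1
    · simpa [h] using hfp i (le_of_lt h)
    · simpa [h] using hgp (i - m1) (by omega)
  · intro i hi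
    by_cases h : i + 1 < m1
    · have h' : i < m1 := by omega
      simpa [h, h'] using hfs i h'
    · by_cases h' : i < m1
      · have he : i + 1 = m1 := by omega
        have : g (i + 1 - m1) = f i.succ := by
          simp [he, hg0, ← hfm]
        simpa [h, h', this, hg0, ← hfm, he] using hfs i h'
      · have e1 : i - m1 + 1 = i + 1 - m1 := by omega
        have : ¬ i + 1 < m1 := by omega
        simpa [h', this, ← e1] using hgs (i - m1) (by omega)

lemma KE.eq_off {S : Set V} {α β : V → C} (h : KE G S α β) : ∀ u ∉ S, β u = α u := by
  obtain ⟨m, f, h0, hm, _, hs⟩ := h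
  intro u hu
  have : ∀ i ≤ m, f i u = α u := by
    intro i
    induction i with
    | zero => intro _; rw [h0]
    | succ i ih => intro hi; rw [(hs i (by omega)).off u hu, ih (by omega)]
  rw [← hm]
  exact this m le_rfl

set_option maxHeartbeats 1000000 in
/-- The key lifting lemma: a Kempe step on `S \ {v}` can be simulated by Kempe changes on `S`. -/
lemma lift {n k d : ℕ} (hk : d + 1 ≤ k) {G : SimpleGraph (Fin n)} {S : Set (Fin n)} {v : Fin n}
    (hvS : v ∈ S) (hdegv : (S ∩ G.neighborSet v).ncard ≤ d)
    {c σ σ' : Fin n → Fin k}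
    (hc : IsProperOn G S c) (hagree : ∀ u ∈ S \ {v}, c u = σ u)
    (hstep : KempeStepOn G (S \ {v}) σ σ') :
    ∃ c', KE G S c c' ∧ ∀ u ∈ S \ {v}, c' u = σ' u := by
  obtain ⟨a, b, w, hw, hwc, hs1, hs2⟩ := hstep
  have hwS : w ∈ S := hw.1
  have hwv : w ≠ v := hw.2
  -- general treatment when `v` is not in the `S`-chain of `w`
  have notin_case : ∀ (c1 : Fin n → Fin k), IsProperOn G S c1 →
      (∀ u ∈ S \ {v}, c1 u = σ u) → (c1 w = a ∨ c1 w = b) →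
      ¬ InKempeChainOn G S c1 a b w v →
      ∃ c', KE G S c1 c' ∧ ∀ u ∈ S \ {v}, c' u = σ' u := by
    intro c1 hc1 hagr1 hwc1 hnv
    refine ⟨kswap G S c1 a b w,
      KE.single hc1 (kswap_proper hc1 hwc1) (kswap_step hwS hwc1), ?_⟩
    intro u hu
    by_cases hmem : InKempeChainOn G S c1 a b w u
    · rw [kswap_of_mem hmem,
        hs1 u (chain_congr hagr1 (chain_of_not_mem_v hnv hmem)), hagr1 u hu]
    · rw [kswap_of_not_mem hmem,
        hs2 u (fun h => hmem (chain_mono Set.diff_subset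
          (chain_congr (fun x hx => (hagr1 x hx).symm) h))), hagr1 u hu]
  have hwcc : c w = a ∨ c w = b := by rw [hagree w hw]; exact hwc
  by_cases hv : InKempeChainOn G S c a b w v
  · -- hard case: `v` lies in the `S`-chain of `w`
    have hvc : c v = a ∨ c v = b := chain_color hv hwcc
    -- extract the last edge entering `v`; in particular `a ≠ b`
    obtain ⟨x0, hx01, hx0⟩ : ∃ x, Relation.ReflTransGen _ w x ∧
        (G.Adj x v ∧ x ∈ S ∧ v ∈ S ∧ (c x = a ∨ c x = b) ∧ (c v = a ∨ c v = b)) := by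
      rcases Relation.ReflTransGen.cases_tail hv with h | ⟨x, hx1, hx2⟩
      · exact absurd h.symm hwv
      · exact ⟨x, hx1, hx2⟩
    have hab : a ≠ b := by
      intro heq
      subst heq
      have h1 := hc hx0.2.1 hvS hx0.1
      rcases hx0.2.2.2.1 with h2 | h2 <;> rcases hvc with h3 | h3 <;>
        exact h1 (h2.trans h3.symm)
    by_cases hmiss : ∃ e : Fin k, e ≠ a ∧ e ≠ b ∧ ∀ u ∈ S ∩ G.neighborSet v, c u ≠ e
    · -- recolor `v` to a free color `e ∉ {a,b}`, then do the swap
      obtain ⟨e, hea, heb, hmiss⟩ := hmiss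
      have hchain1 : ∀ u, InKempeChainOn G S c (c v) e v u → u = v := by
        intro u hm
        refine chain_singleton (fun u huS hadj hor => ?_) hm
        rcases hor with h | h
        · exact hc hvS huS hadj h.symm
        · exact hmiss u ⟨huS, hadj⟩ h
      set c1 := kswap G S c (c v) e v with hc1def
      have hc1v : c1 v = e := by
        rw [hc1def, kswap_self, Equiv.swap_apply_left]
      have hc1u : ∀ u, u ≠ v → c1 u = c u := fun u hu =>
        kswap_of_not_mem (fun h => hu (hchain1 u h))
      have hc1p : IsProperOn G S c1 := kswap_proper hc (Or.inl rfl)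
      have hagr1 : ∀ u ∈ S \ {v}, c1 u = σ u := fun u hu => by
        rw [hc1u u hu.2, hagree u hu]
      have hc1w : c1 w = a ∨ c1 w = b := by rw [hc1u w hwv]; exact hwcc
      have hnv : ¬ InKempeChainOn G S c1 a b w v := by
        intro h
        have := chain_color h hc1w
        rw [hc1v] at this
        tauto
      obtain ⟨c', hKE, hfin⟩ := notin_case c1 hc1p hagr1 hc1w hnv
      exact ⟨c', (KE.single hc hc1p (kswap_step hvS (Or.inl rfl))).trans hKE, hfin⟩
    · -- all colors besides `a`, `b` appear around `v`: `c` is injective near `v`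
      push_neg at hmiss
      have himg : (Set.univ \ {c v} : Set (Fin k)) ⊆ c '' (S ∩ G.neighborSet v) := by
        intro e he
        have hev : e ≠ c v := he.2
        by_cases hea : e = a ∨ e = b
        · refine ⟨x0, ⟨hx0.2.1, hx0.1.symm⟩, ?_⟩
          have h1 : c x0 ≠ c v := hc hx0.2.1 hvS hx0.1
          rcases hx0.2.2.2.1 with h2 | h2 <;> rcases hvc with h3 | h3 <;>
            rcases hea with h4 | h4 <;>
            first
              | exact h2.trans h4.symm
              | exact absurd (h2.trans h3.symm) h1
              | exact absurd (h4.trans h3.symm) hev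
        · push_neg at hea
          obtain ⟨u, hu, hcu⟩ := hmiss e hea.1 hea.2
          exact ⟨u, hu, hcu⟩
      have hfin1 : (S ∩ G.neighborSet v).Finite := Set.toFinite _
      have hcard1 : k - 1 ≤ (c '' (S ∩ G.neighborSet v)).ncard := by
        have h1 : (Set.univ \ {c v} : Set (Fin k)).ncard = k - 1 := by
          rw [Set.ncard_diff_singleton_of_mem (Set.mem_univ _), Set.ncard_univ,
            Nat.card_eq_fintype_card, Fintype.card_fin]
        calc k - 1 = (Set.univ \ {c v} : Set (Fin k)).ncard := h1.symm
          _ ≤ _ := Set.ncard_le_ncard himg (hfin1.image c)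
      have hinj : Set.InjOn c (S ∩ G.neighborSet v) := by
        apply Set.injOn_of_ncard_image_eq ?_ hfin1
        have h2 : (c '' (S ∩ G.neighborSet v)).ncard ≤ (S ∩ G.neighborSet v).ncard :=
          Set.ncard_image_le hfin1
        omega
      refine ⟨kswap G S c a b w,
        KE.single hc (kswap_proper hc hwcc) (kswap_step hwS hwcc), ?_⟩
      intro u hu
      by_cases hmem : InKempeChainOn G S c a b w u
      · rw [kswap_of_mem hmem]
        rcases chain_through_v hc hw hwcc hvc hvS hinj hab hmem with h | h
        · exact absurd h hu.2
        · rw [hs1 u (chain_congr hagree h), hagree u hu]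
      · rw [kswap_of_not_mem hmem,
          hs2 u (fun h => hmem (chain_mono Set.diff_subset
            (chain_congr (fun x hx => (hagree x hx).symm) h))), hagree u hu]
  · exact notin_case c hc hagree hwcc hv

end KempeAux

namespace Final

lemma stepOn_univ {V C : Type*} [DecidableEq C] {G : SimpleGraph V} {α β : V → C}
    (h : KempeAux.KempeStepOn G Set.univ α β) : KempeStep G α β := by
  obtain ⟨a, b, v, _, h1, h2, h3⟩ := h
  exact ⟨a, b, v, h1, h2, h3⟩

open KempeAux in
lemma main {n k d : ℕ} (hk : d + 1 ≤ k) (G : SimpleGraph (Fin n))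
    (hdeg : ∀ s : Set (Fin n), s.Nonempty → ∃ v ∈ s, (s ∩ G.neighborSet v).ncard ≤ d) :
    ∀ (m : ℕ) (S : Set (Fin n)), S.ncard ≤ m → ∀ α β : Fin n → Fin k,
      IsProperOn G S α → IsProperOn G S β → (∀ u, u ∉ S → α u = β u) → KE G S α β := by
  intro m
  induction m with
  | zero =>
    intro S hS α β hα hβ hab
    have hempty : S = ∅ := by
      rw [← Set.ncard_eq_zero (Set.toFinite S)]; omega
    have : α = β := funext fun u => hab u (by simp [hempty])
    rw [this]
    exact KE.refl hβ
  | succ m ih =>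
    intro S hS α β hα hβ hab
    rcases Set.eq_empty_or_nonempty S with rfl | hne
    · have : α = β := funext fun u => hab u (by simp)
      rw [this]
      exact KE.refl hβ
    obtain ⟨v, hvS, hdegv⟩ := hdeg S hne
    have hS' : (S \ {v}).ncard ≤ m := by
      have h1 : (S \ {v}).ncard < S.ncard :=
        Set.ncard_diff_singleton_lt_of_mem hvS (Set.toFinite S)
      omega
    set β' := Function.update β v (α v) with hβ'def
    have hβ'S' : ∀ u, u ≠ v → β' u = β u := fun u hu => Function.update_of_ne hu _ _
    have hβ'p : IsProperOn G (S \ {v}) β' := by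
      intro u1 u2 h1 h2 hadj
      rw [hβ'S' u1 h1.2, hβ'S' u2 h2.2]
      exact hβ h1.1 h2.1 hadj
    have hoff : ∀ u, u ∉ S \ {v} → α u = β' u := by
      intro u hu
      by_cases h : u = v
      · rw [h, hβ'def, Function.update_self]
      · have huS : u ∉ S := fun hs => hu ⟨hs, h⟩
        rw [hβ'S' u h]
        exact hab u huS
    obtain ⟨M, g, hg0, hgM, hgp, hgs⟩ :=
      ih (S \ {v}) hS' α β' (hα.mono Set.diff_subset) hβ'p hoff
    have key : ∀ i ≤ M, ∃ c, KE G S α c ∧ ∀ u ∈ S \ {v}, c u = g i u := by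
      intro i
      induction i with
      | zero => exact fun _ => ⟨α, KE.refl hα, fun u _ => by rw [hg0]⟩
      | succ i ihh =>
        intro hi
        obtain ⟨c, hKE, hagr⟩ := ihh (by omega)
        obtain ⟨c', hKE', hagr'⟩ :=
          lift hk hvS hdegv hKE.proper_right hagr (hgs i (by omega))
        exact ⟨c', hKE.trans hKE', hagr'⟩
    obtain ⟨c, hKE, hagr⟩ := key M le_rfl
    have hcS' : ∀ u ∈ S \ {v}, c u = β u := fun u hu => by
      rw [hagr u hu, hgM, hβ'S' u hu.2]
    have hcp := hKE.proper_right
    have hcoff : ∀ u, u ∉ S → c u = β u := fun u hu => by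
      rw [hKE.eq_off u hu, hab u hu]
    by_cases hcv : c v = β v
    · have : c = β := funext fun u => by
        by_cases h1 : u ∈ S
        · by_cases h2 : u = v
          · rw [h2]; exact hcv
          · exact hcS' u ⟨h1, h2⟩
        · exact hcoff u h1
      rw [← this]
      exact hKE
    · have hchain : ∀ u, InKempeChainOn G S c (c v) (β v) v u → u = v := by
        intro u hm
        refine chain_singleton (fun u huS hadj hor => ?_) hm
        have huv : u ≠ v := (G.ne_of_adj hadj).symm
        rcases hor with h | h
        · exact hcp hvS huS hadj h.symm
        · exact hβ huS hvS hadj.symm ((hcS' u ⟨huS, huv⟩).symm.trans h)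
      have hc2 : kswap G S c (c v) (β v) v = β := by
        funext u
        by_cases h : u = v
        · rw [h, kswap_self, Equiv.swap_apply_left]
        · rw [kswap_of_not_mem (fun hm => h (hchain u hm))]
          by_cases h1 : u ∈ S
          · exact hcS' u ⟨h1, h⟩
          · exact hcoff u h1
      exact hKE.trans (hc2 ▸ KE.single hcp (kswap_proper hcp (Or.inl rfl))
        (kswap_step hvS (Or.inl rfl)))

end Final

theorem statement_3 (n d k : ℕ) (hd : 1 ≤ d) (hk : d + 1 ≤ k) (G : SimpleGraph (Fin n))
    (hdeg : ∀ s : Set (Fin n), s.Nonempty → ∃ v ∈ s, (s ∩ G.neighborSet v).ncard ≤ d)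
    (α β : Fin n → Fin k) (hα : IsProperColoring G α) (hβ : IsProperColoring G β) :
    ∃ N : ℕ, KempeEquivIn G (IsProperColoring G) N α β := by
  obtain ⟨m, f, h0, hm, hp, hs⟩ :=
    Final.main hk G hdeg (Set.univ : Set (Fin n)).ncard Set.univ le_rfl α β
      (fun u v _ _ h => hα h) (fun u v _ _ h => hβ h)
      (fun u hu => absurd (Set.mem_univ u) hu)
  exact ⟨m, m, f, le_rfl, h0, hm, fun i hi => KempeAux.isProperOn_univ (hp i hi),
    fun i hi => Final.stepOn_univ (hs i hi)⟩
end

section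
/- Let G be a chordal graph on n vertices and let p be a positive integer. Then any two p-colorings of G are Kempe equivalent up to at most n Kempe changes. -/
open SimpleGraph

/-- A graph is chordal if every cycle of length at least 4 has a chord. -/
def IsChordal {V : Type*} (G : SimpleGraph V) : Prop :=
  ∀ (v : V) (w : G.Walk v v), w.IsCycle → 4 ≤ w.length →
    ∃ x y : V, x ∈ w.support ∧ y ∈ w.support ∧ G.Adj x y ∧ s(x, y) ∉ w.edges

/-! ### Auxiliary material -/

/-- A vertex is simplicial if its neighborhood is a clique. -/
def IsSimplicial {V : Type*} (G : SimpleGraph V) (v : V) : Prop :=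
  ∀ x y, G.Adj v x → G.Adj v y → x ≠ y → G.Adj x y

section RTG

theorem rtg_crossing {α : Type*} {r : α → α → Prop} {P : α → Prop} {a c : α}
    (h : Relation.ReflTransGen r a c) (hc : ¬ P c) (ha : P a) :
    ∃ u w, P u ∧ ¬ P w ∧ r u w := by
  revert ha
  induction h using Relation.ReflTransGen.head_induction_on with
  | refl => exact fun ha => absurd ha hc
  | @head x y h' htail ih =>
    intro ha
    by_cases hP : P y
    · exact ih hP
    · exact ⟨_, _, ha, hP, h'⟩

theorem rtg_subtype {α : Type*} {p : α → Prop} {r : α → α → Prop}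
    {r' : {x // p x} → {x // p x} → Prop}
    (hr : ∀ (x y : α) (hx : p x) (hy : p y), r x y → r' ⟨x, hx⟩ ⟨y, hy⟩)
    {u w : {x // p x}} (h : Relation.ReflTransGen (fun x y => r x y ∧ p x ∧ p y) u.val w.val) :
    Relation.ReflTransGen r' u w := by
  suffices H : ∀ (x : α), Relation.ReflTransGen (fun x y => r x y ∧ p x ∧ p y) x w.val →
      ∀ (hx : p x), Relation.ReflTransGen r' ⟨x, hx⟩ w by
    exact H u.val h u.prop
  intro x hxw
  induction hxw using Relation.ReflTransGen.head_induction_on with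
  | refl =>
    intro hx
    have : (⟨w.val, hx⟩ : {x // p x}) = w := Subtype.ext rfl
    rw [this]
  | head hstep htail ih =>
    intro hx
    exact Relation.ReflTransGen.head (hr _ _ hx hstep.2.2 hstep.1) (ih hstep.2.2)

end RTG

section Kempe

variable {V C : Type*} [DecidableEq C] {G : SimpleGraph V}

open Classical in
/-- Apply a Kempe change. -/
noncomputable def kempeApply (G : SimpleGraph V) (γ : V → C) (a b : C) (v : V) : V → C :=
  fun x => if InKempeChain G γ a b v x then Equiv.swap a b (γ x) else γ x

theorem kempeApply_of_mem {γ : V → C} {a b : C} {v u : V} (h : InKempeChain G γ a b v u) :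
    kempeApply G γ a b v u = Equiv.swap a b (γ u) := if_pos h

theorem kempeApply_of_not_mem {γ : V → C} {a b : C} {v u : V} (h : ¬ InKempeChain G γ a b v u) :
    kempeApply G γ a b v u = γ u := if_neg h

theorem kempeStep_kempeApply {γ : V → C} {a b : C} {v : V} (h : γ v = a ∨ γ v = b) :
    KempeStep G γ (kempeApply G γ a b v) :=
  ⟨a, b, v, h, fun _ hu => kempeApply_of_mem hu, fun _ hu => kempeApply_of_not_mem hu⟩

theorem InKempeChain.color {γ : V → C} {a b : C} {v u : V} (hv : γ v = a ∨ γ v = b)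
    (h : InKempeChain G γ a b v u) : γ u = a ∨ γ u = b := by
  rcases Relation.ReflTransGen.cases_tail h with h | ⟨c, _, hc⟩
  · rw [h]; exact hv
  · exact hc.2.2.2.2

theorem InKempeChain.extend {γ : V → C} {a b : C} {v u w : V} (hv : γ v = a ∨ γ v = b)
    (h : InKempeChain G γ a b v u)
    (hadj : G.Adj u w) (hw : γ w = a ∨ γ w = b) : InKempeChain G γ a b v w :=
  Relation.ReflTransGen.tail h ⟨hadj, Set.mem_univ _, Set.mem_univ _, h.color hv, hw⟩

theorem IsProperColoring.kempeStep {γ δ : V → C} (hγ : IsProperColoring G γ)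
    (h : KempeStep G γ δ) : IsProperColoring G δ := by
  obtain ⟨a, b, v, hv, h1, h2⟩ := h
  have key : ∀ {x y : V}, G.Adj x y → InKempeChain G γ a b v x → ¬InKempeChain G γ a b v y →
      Equiv.swap a b (γ x) ≠ γ y := by
    intro x y hxy hx hy heq
    have hycol : ¬(γ y = a ∨ γ y = b) := fun hc => hy (hx.extend hv hxy hc)
    rcases hx.color hv with h' | h' <;> rw [h'] at heq
    · rw [Equiv.swap_apply_left] at heq
      exact hycol (Or.inr heq.symm)
    · rw [Equiv.swap_apply_right] at heq
      exact hycol (Or.inl heq.symm)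
  intro x y hxy
  by_cases hx : InKempeChain G γ a b v x <;> by_cases hy : InKempeChain G γ a b v y
  · rw [h1 x hx, h1 y hy]
    exact fun hEq => hγ hxy ((Equiv.swap a b).injective hEq)
  · rw [h1 x hx, h2 y hy]; exact key hxy hx hy
  · rw [h2 x hx, h1 y hy]
    intro heq
    exact key hxy.symm hy hx heq.symm
  · rw [h2 x hx, h2 y hy]; exact hγ hxy

theorem chain_singleton {γ : V → C} {a b : C} {v : V}
    (hnb : ∀ w, G.Adj v w → ¬(γ w = a ∨ γ w = b)) :
    ∀ u, InKempeChain G γ a b v u → u = v := by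
  intro u h
  rcases Relation.ReflTransGen.cases_head h with h | ⟨c, hc, _⟩
  · exact h.symm
  · exact absurd hc.2.2.2.2 (hnb _ hc.1)

theorem chain_avoid_aux {v : V} (hs : IsSimplicial G v) {γ : V → C} {a b : C} {w : V} (hw : w ≠ v) :
    ∀ (n : ℕ) (l : List V), l.length ≤ n → ∀ (u : V), u ≠ v →
      List.Chain (fun x y => G.Adj x y ∧ x ∈ Set.univ ∧ y ∈ Set.univ ∧
        (γ x = a ∨ γ x = b) ∧ (γ y = a ∨ γ y = b)) u l →
      List.getLast (u :: l) (List.cons_ne_nil _ _) = w →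
      Relation.ReflTransGen
        (fun x y => (G.Adj x y ∧ (γ x = a ∨ γ x = b) ∧ (γ y = a ∨ γ y = b)) ∧ x ≠ v ∧ y ≠ v)
        u w := by
  intro n
  induction n with
  | zero =>
    intro l hl u _ _ hlast
    have hnil : l = [] := List.eq_nil_of_length_eq_zero (Nat.le_zero.mp hl)
    subst hnil
    simp only [List.getLast_singleton'] at hlast
    subst hlast
    exact Relation.ReflTransGen.refl
  | succ n ih =>
    intro l hl u hu hchain hlast
    cases l with
    | nil =>
      simp only [List.getLast_singleton'] at hlast
      subst hlast
      exact Relation.ReflTransGen.refl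
    | cons c l' =>
      change List.IsChain _ (u :: c :: l') at hchain
      rw [List.chain_cons] at hchain
      obtain ⟨huc, hchain'⟩ := hchain
      have hlast' : List.getLast (c :: l') (List.cons_ne_nil _ _) = w := by
        rwa [List.getLast_cons_cons] at hlast
      by_cases hc : c = v
      · rw [hc] at huc hchain' hlast'
        cases l' with
        | nil =>
          simp only [List.getLast_singleton'] at hlast'
          exact absurd hlast'.symm hw
        | cons d l'' =>
          rw [List.chain_cons] at hchain'
          obtain ⟨hvd, hchain''⟩ := hchain'
          have hd : d ≠ v := hvd.1.ne'
          have hlast'' : List.getLast (d :: l'') (List.cons_ne_nil _ _) = w := by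
            rwa [List.getLast_cons_cons] at hlast'
          have hlen : l''.length ≤ n := by
            simp only [List.length_cons] at hl; omega
          have htail := ih l'' hlen d hd hchain'' hlast''
          by_cases hud : u = d
          · rwa [hud]
          · exact Relation.ReflTransGen.head
              ⟨⟨hs u d huc.1.symm hvd.1 hud, huc.2.2.2.1, hvd.2.2.2.2⟩, hu, hd⟩ htail
      · have hlen : l'.length ≤ n := by
          simp only [List.length_cons] at hl; omega
        have htail := ih l' hlen c hc hchain' hlast'
        exact Relation.ReflTransGen.head
          ⟨⟨huc.1, huc.2.2.2.1, huc.2.2.2.2⟩, hu, hc⟩ htail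

theorem chain_induce_iff {v : V} (hs : IsSimplicial G v) {γ : V → C} {a b : C}
    (u w : ({u | u ≠ v} : Set V)) :
    InKempeChain (G.induce {u | u ≠ v}) (fun x => γ x.val) a b u w ↔
      InKempeChain G γ a b u.val w.val := by
  constructor
  · intro h
    refine Relation.ReflTransGen.lift Subtype.val ?_ _ _ h
    rintro x y ⟨hadj, _, _, hcx, hcy⟩
    exact ⟨hadj, Set.mem_univ _, Set.mem_univ _, hcx, hcy⟩
  · intro h
    obtain ⟨l, hchain, hlast⟩ := List.exists_isChain_cons_of_relationReflTransGen h
    have h2 := chain_avoid_aux hs (γ := γ) (a := a) (b := b) w.prop l.length l le_rfl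
      u.val u.prop hchain hlast
    refine rtg_subtype (r := fun x y => G.Adj x y ∧ (γ x = a ∨ γ x = b) ∧ (γ y = a ∨ γ y = b))
      (p := fun x => x ≠ v) ?_ ?_
    · rintro x y hx hy ⟨hadj, hcx, hcy⟩
      exact ⟨hadj, Set.mem_univ _, Set.mem_univ _, hcx, hcy⟩
    · exact Relation.ReflTransGen.mono (fun x y hxy => ⟨hxy.1, hxy.2.1, hxy.2.2⟩) _ _ h2

/-- Lifting a Kempe step through a simplicial vertex. -/
theorem lift_step {v : V} (hv : IsSimplicial G v) {γ : V → C} (hγ : IsProperColoring G γ)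
    {γ' δ' : ({u | u ≠ v} : Set V) → C} (hres : ∀ x, γ x.val = γ' x)
    {a b : C} {u : ({u | u ≠ v} : Set V)} (hu : γ' u = a ∨ γ' u = b)
    (h1 : ∀ z, InKempeChain (G.induce {u | u ≠ v}) γ' a b u z → δ' z = Equiv.swap a b (γ' z))
    (h2 : ∀ z, ¬InKempeChain (G.induce {u | u ≠ v}) γ' a b u z → δ' z = γ' z) :
    KempeStep G γ (kempeApply G γ a b u.val) ∧
      (∀ x, kempeApply G γ a b u.val x.val = δ' x) ∧
      IsProperColoring G (kempeApply G γ a b u.val) := by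
  have hγ' : γ' = fun x => γ x.val := funext fun z => (hres z).symm
  subst hγ'
  have hstep : KempeStep G γ (kempeApply G γ a b u.val) :=
    kempeStep_kempeApply (by rw [hres]; exact hu)
  refine ⟨hstep, ?_, hγ.kempeStep hstep⟩
  intro x
  by_cases hin : InKempeChain G γ a b u.val x.val
  · rw [kempeApply_of_mem hin, h1 x ((chain_induce_iff hv u x).mpr hin)]
  · rw [kempeApply_of_not_mem hin, h2 x (fun hc => hin ((chain_induce_iff hv u x).mp hc))]

end Kempe

section Chordal

theorem IsChordal.induce {V : Type*} {G : SimpleGraph V} (hG : IsChordal G) (s : Set V) :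
    IsChordal (G.induce s) := by
  intro v w hc hl
  let f : G.induce s →g G := ⟨fun x => x.val, fun {x y} h => h⟩
  have hinj : Function.Injective f := Subtype.val_injective
  obtain ⟨x, y, hx, hy, hadj, hne⟩ := hG v.val (w.map f) (hc.map hinj) (by rwa [Walk.length_map])
  rw [Walk.support_map, List.mem_map] at hx hy
  obtain ⟨x₀, hx₀, rfl⟩ := hx
  obtain ⟨y₀, hy₀, rfl⟩ := hy
  refine ⟨x₀, y₀, hx₀, hy₀, hadj, fun hmem => hne ?_⟩
  rw [Walk.edges_map]
  have : Sym2.map f s(x₀, y₀) = s(f x₀, f y₀) := Sym2.map_pair_eq f x₀ y₀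
  rw [← this]
  exact List.mem_map_of_mem hmem

/-- A walk of minimal length among walks with support inside `T` is an induced path. -/
theorem min_walk_induced {V : Type*} {G : SimpleGraph V} {T : Set V} {x y : V} {W : G.Walk x y}
    (hT : ∀ z ∈ W.support, z ∈ T)
    (hmin : ∀ (W' : G.Walk x y), (∀ z ∈ W'.support, z ∈ T) → W.length ≤ W'.length)
    {u w : V} (hu : u ∈ W.support) (hw : w ∈ W.support) (hadj : G.Adj u w) :
    s(u, w) ∈ W.edges := by
  by_contra hne
  obtain ⟨q, r, rfl⟩ := Walk.mem_support_iff_exists_append.mp hu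
  rcases (Walk.mem_support_append_iff q r).mp hw with hwq | hwr
  · -- w occurs in q : x → u ; q = q1 ++ q2 with q2 : w → u
    obtain ⟨q1, q2, rfl⟩ := Walk.mem_support_iff_exists_append.mp hwq
    have hlen2 : 2 ≤ q2.length := by
      rcases Nat.lt_or_ge q2.length 2 with h2 | h2
      · interval_cases h : q2.length
        · exact absurd (Walk.eq_of_length_eq_zero h) hadj.ne'
        · exfalso
          apply hne
          have : s(w, u) ∈ q2.edges := by
            cases q2 with
            | nil => simp at h
            | cons hadj' p =>
              cases p with
              | nil => simp
              | cons h1 p1 => simp [Walk.length_cons] at h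
          rw [Sym2.eq_swap] at this
          rw [Walk.edges_append, Walk.edges_append]
          exact List.mem_append_left _ (List.mem_append_right _ this)
      · exact h2
    -- shorter walk : q1 ++ (cons (w~u) r)
    have hW' : ∀ z ∈ (q1.append (Walk.cons hadj.symm r)).support, z ∈ T := by
      intro z hz
      rcases (Walk.mem_support_append_iff _ _).mp hz with hz | hz
      · exact hT z (by
          rw [Walk.mem_support_append_iff, Walk.mem_support_append_iff]
          exact Or.inl (Or.inl hz))
      · rw [Walk.support_cons, List.mem_cons] at hz
        rcases hz with rfl | hz
        · exact hT z (by
            rw [Walk.mem_support_append_iff, Walk.mem_support_append_iff]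
            exact Or.inl (Or.inr (Walk.start_mem_support q2)))
        · exact hT z (by
            rw [Walk.mem_support_append_iff]
            exact Or.inr hz)
    have := hmin _ hW'
    rw [Walk.length_append, Walk.length_append, Walk.length_append, Walk.length_cons] at this
    omega
  · -- w occurs in r : u → y ; r = r1 ++ r2 with r1 : u → w
    obtain ⟨r1, r2, rfl⟩ := Walk.mem_support_iff_exists_append.mp hwr
    have hlen2 : 2 ≤ r1.length := by
      rcases Nat.lt_or_ge r1.length 2 with h2 | h2
      · interval_cases h : r1.length
        · exact absurd (Walk.eq_of_length_eq_zero h) hadj.ne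
        · exfalso
          apply hne
          have : s(u, w) ∈ r1.edges := by
            cases r1 with
            | nil => simp at h
            | cons hadj' p =>
              cases p with
              | nil => simp
              | cons h1 p1 => simp [Walk.length_cons] at h
          rw [Walk.edges_append, Walk.edges_append]
          exact List.mem_append_right _ (List.mem_append_left _ this)
      · exact h2
    have hW' : ∀ z ∈ (q.append (Walk.cons hadj r2)).support, z ∈ T := by
      intro z hz
      rcases (Walk.mem_support_append_iff _ _).mp hz with hz | hz
      · exact hT z (by
          rw [Walk.mem_support_append_iff]
          exact Or.inl hz)
      · rw [Walk.support_cons, List.mem_cons] at hz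
        rcases hz with rfl | hz
        · exact hT z (by
            rw [Walk.mem_support_append_iff]
            exact Or.inl (Walk.end_mem_support q))
        · exact hT z (by
            rw [Walk.mem_support_append_iff, Walk.mem_support_append_iff]
            exact Or.inr (Or.inr hz))
    have := hmin _ hW'
    rw [Walk.length_append, Walk.length_append, Walk.length_append, Walk.length_cons] at this
    omega

end Chordal

section Separator

variable {V : Type*} (G : SimpleGraph V)

/-- Adjacency avoiding a vertex set. -/
def Avoid (s : Finset V) : V → V → Prop :=
  fun x y => G.Adj x y ∧ x ∉ s ∧ y ∉ s

variable {G}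

theorem avoid_symm {s : Finset V} : Symmetric (Avoid G s) :=
  fun _ _ h => ⟨h.1.symm, h.2.2, h.2.1⟩

theorem avoid_not_mem {s : Finset V} {r u : V} (hr : r ∉ s)
    (h : Relation.ReflTransGen (Avoid G s) r u) : u ∉ s := by
  rcases Relation.ReflTransGen.cases_tail h with h | ⟨c, _, hc⟩
  · rw [h]; exact hr
  · exact hc.2.2

theorem avoid_extend {s : Finset V} {r u w : V} (hr : r ∉ s)
    (h : Relation.ReflTransGen (Avoid G s) r u) (hadj : G.Adj u w) (hw : w ∉ s) :
    Relation.ReflTransGen (Avoid G s) r w :=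
  h.tail ⟨hadj, avoid_not_mem hr h, hw⟩

theorem avoid_connect {s : Finset V} {r r' u : V}
    (h1 : Relation.ReflTransGen (Avoid G s) r u)
    (h2 : Relation.ReflTransGen (Avoid G s) r' u) :
    Relation.ReflTransGen (Avoid G s) r r' :=
  h1.trans ((@Relation.ReflTransGen.stdSymm V (Avoid G s) ⟨fun _ _ h => avoid_symm h⟩).symm _ _ h2)

theorem sep_neighbor [DecidableEq V] {s : Finset V} {r t x : V} (hr : r ∉ s)
    (hsep : ¬ Relation.ReflTransGen (Avoid G s) r t) (hx : x ∈ s)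
    (hpath : Relation.ReflTransGen (Avoid G (s.erase x)) r t) :
    ∃ u, Relation.ReflTransGen (Avoid G s) r u ∧ G.Adj u x := by
  obtain ⟨u, w, hu, hw, hrel⟩ :=
    rtg_crossing (P := fun z => Relation.ReflTransGen (Avoid G s) r z) hpath hsep
      Relation.ReflTransGen.refl
  have hws : w ∈ s := by
    by_contra hws
    exact hw (avoid_extend hr hu hrel.1 hws)
  have hwx : w = x := by
    by_contra hwx
    have hmem := hrel.2.2
    rw [Finset.mem_erase] at hmem
    push_neg at hmem
    exact hmem hwx hws
  exact ⟨u, hu, hwx ▸ hrel.1⟩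

end Separator

section Dirac

/-- Dirac's theorem: a chordal graph is complete or has two nonadjacent simplicial vertices. -/
theorem dirac_aux : ∀ (N : ℕ) (V : Type) [Fintype V] [DecidableEq V] (G : SimpleGraph V),
    Fintype.card V ≤ N → IsChordal G →
    (∀ x y : V, x ≠ y → G.Adj x y) ∨
      ∃ x y : V, x ≠ y ∧ ¬ G.Adj x y ∧ IsSimplicial G x ∧ IsSimplicial G y := by
  intro N
  induction N with
  | zero =>
    intro V _ _ G hcard _
    left
    intro x y _
    have : IsEmpty V := Fintype.card_eq_zero_iff.mp (Nat.le_zero.mp hcard)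
    exact absurd trivial (this.false x).elim
  | succ N IH =>
    intro V _ _ G hcard hG
    by_cases hcomp : ∀ x y : V, x ≠ y → G.Adj x y
    · exact Or.inl hcomp
    right
    push_neg at hcomp
    obtain ⟨a, b, hab, hnadj⟩ := hcomp
    classical
    -- separators
    have hsep_ex : ∃ s : Finset V, (¬ Relation.ReflTransGen (Avoid G s) a b) ∧ a ∉ s ∧ b ∉ s := by
      refine ⟨Finset.univ \ {a, b}, ?_, by simp, by simp [hab.symm]⟩
      intro h
      rcases Relation.ReflTransGen.cases_head h with h | ⟨c, hc, _⟩
      · exact hab h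
      · have hc2 : c ∉ Finset.univ \ ({a, b} : Finset V) := hc.2.2
        simp only [Finset.mem_sdiff, Finset.mem_univ, true_and, not_not, Finset.mem_insert,
          Finset.mem_singleton] at hc2
        rcases hc2 with rfl | rfl
        · exact hc.1.ne rfl
        · exact hnadj hc.1
    obtain ⟨s, hsmem, hsmin⟩ := Finset.exists_min_image
      (Finset.univ.filter (fun s : Finset V =>
        (¬ Relation.ReflTransGen (Avoid G s) a b) ∧ a ∉ s ∧ b ∉ s)) Finset.card
      (by
        obtain ⟨s, h1, h2, h3⟩ := hsep_ex
        exact ⟨s, Finset.mem_filter.mpr ⟨Finset.mem_univ _, h1, h2, h3⟩⟩)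
    rw [Finset.mem_filter] at hsmem
    obtain ⟨_, hsep, has, hbs⟩ := hsmem
    have hsmin' : ∀ s' : Finset V,
        (¬ Relation.ReflTransGen (Avoid G s') a b) → a ∉ s' → b ∉ s' → s.card ≤ s'.card := by
      intro s' h1 h2 h3
      exact hsmin s' (Finset.mem_filter.mpr ⟨Finset.mem_univ _, h1, h2, h3⟩)
    have hsep' : ¬ Relation.ReflTransGen (Avoid G s) b a :=
      fun h => hsep ((@Relation.ReflTransGen.stdSymm V (Avoid G s) ⟨fun _ _ h => avoid_symm h⟩).symm _ _ h)
    -- neighbors of separator vertices on each side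
    have hnbrA : ∀ x ∈ s, ∃ u, Relation.ReflTransGen (Avoid G s) a u ∧ G.Adj u x := by
      intro x hx
      have hlt : (s.erase x).card < s.card := Finset.card_erase_lt_of_mem hx
      have hfail : Relation.ReflTransGen (Avoid G (s.erase x)) a b := by
        by_contra h
        have := hsmin' (s.erase x) h (fun hc => has (Finset.mem_of_mem_erase hc))
          (fun hc => hbs (Finset.mem_of_mem_erase hc))
        omega
      exact sep_neighbor has hsep hx hfail
    have hnbrB : ∀ x ∈ s, ∃ u, Relation.ReflTransGen (Avoid G s) b u ∧ G.Adj u x := by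
      intro x hx
      have hlt : (s.erase x).card < s.card := Finset.card_erase_lt_of_mem hx
      have hfail : Relation.ReflTransGen (Avoid G (s.erase x)) b a := by
        by_contra h
        have hfail' : ¬ Relation.ReflTransGen (Avoid G (s.erase x)) a b :=
          fun hh => h ((@Relation.ReflTransGen.stdSymm V (Avoid G (s.erase x)) ⟨fun _ _ h => avoid_symm h⟩).symm _ _ hh)
        have := hsmin' (s.erase x) hfail' (fun hc => has (Finset.mem_of_mem_erase hc))
          (fun hc => hbs (Finset.mem_of_mem_erase hc))
        omega
      exact sep_neighbor hbs hsep' hx hfail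
    set A : Set V := {u | Relation.ReflTransGen (Avoid G s) a u} with hA
    set B : Set V := {u | Relation.ReflTransGen (Avoid G s) b u} with hB
    have haA : a ∈ A := Relation.ReflTransGen.refl
    have hbB : b ∈ B := Relation.ReflTransGen.refl
    have hAs : ∀ z ∈ A, z ∉ s := fun z hz => avoid_not_mem has hz
    have hBs : ∀ z ∈ B, z ∉ s := fun z hz => avoid_not_mem hbs hz
    have hAB : ∀ z ∈ A, z ∉ B := fun z hzA hzB => hsep (avoid_connect hzA hzB)
    have hAext : ∀ z ∈ A, ∀ w, G.Adj z w → w ∉ s → w ∈ A :=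
      fun z hz w hadj hw => avoid_extend has hz hadj hw
    have hBext : ∀ z ∈ B, ∀ w, G.Adj z w → w ∉ s → w ∈ B :=
      fun z hz w hadj hw => avoid_extend hbs hz hadj hw
    have hABadj : ∀ z ∈ A, ∀ w ∈ B, ¬ G.Adj z w := by
      intro z hz w hw hadj
      exact hAB w (hAext z hz w hadj (hBs w hw)) hw
    have hbA : b ∉ A := hsep
    have haB : a ∉ B := fun h => hsep ((@Relation.ReflTransGen.stdSymm V (Avoid G s) ⟨fun _ _ h => avoid_symm h⟩).symm _ _ h)
    -- walks within a component
    have hwalk : ∀ (r : V), r ∉ s → ∀ u, Relation.ReflTransGen (Avoid G s) r u →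
        ∃ W : G.Walk r u, ∀ z ∈ W.support, Relation.ReflTransGen (Avoid G s) r z := by
      intro r _ u h
      induction h with
      | refl =>
        refine ⟨Walk.nil, ?_⟩
        intro z hz
        rw [Walk.support_nil, List.mem_singleton] at hz
        subst hz
        exact Relation.ReflTransGen.refl
      | tail hru hstep ih =>
        obtain ⟨W, hW⟩ := ih
        refine ⟨W.concat hstep.1, ?_⟩
        intro z hz
        rw [Walk.support_concat, List.mem_append, List.mem_singleton] at hz
        rcases hz with hz | rfl
        · exact hW z hz
        · exact hru.tail hstep
    -- the separator is a clique
    have hclique : ∀ x ∈ s, ∀ y ∈ s, x ≠ y → G.Adj x y := by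
      intro x hxs y hys hxy
      by_contra hnadjxy
      -- minimal path through A
      obtain ⟨ux, hux, huxx⟩ := hnbrA x hxs
      obtain ⟨uy, huy, huyy⟩ := hnbrA y hys
      obtain ⟨W1, hW1⟩ := hwalk a has ux hux
      obtain ⟨W2, hW2⟩ := hwalk a has uy huy
      set TA : Set V := A ∪ {x, y} with hTA
      have hxTA : x ∈ TA := Or.inr (Or.inl rfl)
      have hyTA : y ∈ TA := Or.inr (Or.inr rfl)
      have hWxy : ∃ (W : G.Walk x y), ∀ z ∈ W.support, z ∈ TA := by
        refine ⟨Walk.cons huxx.symm ((W1.reverse.append W2).concat huyy), ?_⟩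
        intro z hz
        rw [Walk.support_cons, List.mem_cons] at hz
        rcases hz with rfl | hz
        · exact hxTA
        rw [Walk.support_concat, List.mem_append, List.mem_singleton] at hz
        rcases hz with hz | rfl
        · rw [Walk.mem_support_append_iff] at hz
          rcases hz with hz | hz
          · rw [Walk.support_reverse, List.mem_reverse] at hz
            exact Or.inl (hW1 z hz)
          · exact Or.inl (hW2 z hz)
        · exact hyTA
      -- minimal such walk
      have hexA : ∃ n, ∃ W : G.Walk x y, (∀ z ∈ W.support, z ∈ TA) ∧ W.length = n := by
        obtain ⟨W, hW⟩ := hWxy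
        exact ⟨W.length, W, hW, rfl⟩
      obtain ⟨W0, hW0sup, hW0len⟩ := Nat.find_spec hexA
      have hW0min : ∀ (W' : G.Walk x y), (∀ z ∈ W'.support, z ∈ TA) →
          W0.length ≤ W'.length := by
        intro W' hW'
        rw [hW0len]
        exact Nat.find_min' hexA ⟨W', hW', rfl⟩
      set P := W0.bypass with hPdef
      have hPpath : P.IsPath := W0.bypass_isPath
      have hPsup : ∀ z ∈ P.support, z ∈ TA := fun z hz => hW0sup z (W0.support_bypass_subset hz)
      have hPmin : ∀ (W' : G.Walk x y), (∀ z ∈ W'.support, z ∈ TA) →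
          P.length ≤ W'.length :=
        fun W' hW' => le_trans W0.length_bypass_le (hW0min W' hW')
      -- minimal path through B
      obtain ⟨vx, hvx, hvxx⟩ := hnbrB x hxs
      obtain ⟨vy, hvy, hvyy⟩ := hnbrB y hys
      obtain ⟨X1, hX1⟩ := hwalk b hbs vx hvx
      obtain ⟨X2, hX2⟩ := hwalk b hbs vy hvy
      set TB : Set V := B ∪ {x, y} with hTB
      have hWyx : ∃ (W : G.Walk y x), ∀ z ∈ W.support, z ∈ TB := by
        refine ⟨Walk.cons hvyy.symm ((X2.reverse.append X1).concat hvxx), ?_⟩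
        intro z hz
        rw [Walk.support_cons, List.mem_cons] at hz
        rcases hz with rfl | hz
        · exact Or.inr (Or.inr rfl)
        rw [Walk.support_concat, List.mem_append, List.mem_singleton] at hz
        rcases hz with hz | rfl
        · rw [Walk.mem_support_append_iff] at hz
          rcases hz with hz | hz
          · rw [Walk.support_reverse, List.mem_reverse] at hz
            exact Or.inl (hX2 z hz)
          · exact Or.inl (hX1 z hz)
        · exact Or.inr (Or.inl rfl)
      have hexB : ∃ n, ∃ W : G.Walk y x, (∀ z ∈ W.support, z ∈ TB) ∧ W.length = n := by
        obtain ⟨W, hW⟩ := hWyx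
        exact ⟨W.length, W, hW, rfl⟩
      obtain ⟨X0, hX0sup, hX0len⟩ := Nat.find_spec hexB
      have hX0min : ∀ (W' : G.Walk y x), (∀ z ∈ W'.support, z ∈ TB) →
          X0.length ≤ W'.length := by
        intro W' hW'
        rw [hX0len]
        exact Nat.find_min' hexB ⟨W', hW', rfl⟩
      set Q := X0.bypass with hQdef
      have hQpath : Q.IsPath := X0.bypass_isPath
      have hQsup : ∀ z ∈ Q.support, z ∈ TB := fun z hz => hX0sup z (X0.support_bypass_subset hz)
      have hQmin : ∀ (W' : G.Walk y x), (∀ z ∈ W'.support, z ∈ TB) →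
          Q.length ≤ W'.length :=
        fun W' hW' => le_trans X0.length_bypass_le (hX0min W' hW')
      -- lengths at least 2
      have hlen2 : ∀ {c d : V} (W : G.Walk c d), c ≠ d → ¬ G.Adj c d → 2 ≤ W.length := by
        intro c d W hcd hncd
        rcases Nat.lt_or_ge W.length 2 with h2 | h2
        · interval_cases h : W.length
          · exact absurd (Walk.eq_of_length_eq_zero h) hcd
          · exact absurd (Walk.adj_of_length_eq_one h) hncd
        · exact h2
      have hPlen : 2 ≤ P.length := hlen2 P hxy hnadjxy
      have hQlen : 2 ≤ Q.length := hlen2 Q hxy.symm (fun h => hnadjxy h.symm)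
      -- decompose P
      obtain ⟨u1, hxu1, P', hPP'⟩ := Walk.exists_eq_cons_of_ne hxy P
      have hP'path : P'.IsPath := by
        rw [hPP'] at hPpath
        exact hPpath.of_cons
      have hxP' : x ∉ P'.support := by
        rw [hPP'] at hPpath
        rw [Walk.isPath_def, Walk.support_cons] at hPpath
        exact (List.nodup_cons.mp hPpath).1
      have hP'sup : ∀ z ∈ P'.support, z ∈ TA := by
        intro z hz
        apply hPsup
        rw [hPP', Walk.support_cons]
        exact List.mem_cons_of_mem _ hz
      have hu1y : u1 ≠ y := by
        intro h
        subst h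
        cases P' with
        | nil =>
          rw [hPP'] at hPlen
          simp [Walk.length_cons] at hPlen
        | cons h2 p2 =>
          rw [Walk.isPath_def, Walk.support_cons, List.nodup_cons] at hP'path
          exact hP'path.1 (Walk.end_mem_support p2)
      have hu1A : u1 ∈ A := by
        have : u1 ∈ TA := hP'sup u1 (Walk.start_mem_support P')
        rcases this with h | h
        · exact h
        · rcases h with rfl | rfl
          · exact absurd rfl hxu1.ne'
          · exact absurd rfl hu1y
      -- Q support tail facts
      have hQsupeq : Q.support = y :: Q.support.tail := Walk.support_eq_cons Q
      have hQnodup : Q.support.Nodup := hQpath.support_nodup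
      have hyQtail : y ∉ Q.support.tail := by
        rw [hQsupeq] at hQnodup
        exact (List.nodup_cons.mp hQnodup).1
      have hQtailnodup : Q.support.tail.Nodup := by
        rw [hQsupeq] at hQnodup
        exact (List.nodup_cons.mp hQnodup).2
      have hQtailsub : ∀ z ∈ Q.support.tail, z ∈ TB := by
        intro z hz
        apply hQsup
        rw [hQsupeq]
        exact List.mem_cons_of_mem _ hz
      -- the cycle
      set cyc : G.Walk x x := Walk.cons hxu1 (P'.append Q) with hcyc
      have hcycsup : ∀ z ∈ cyc.support, z ∈ P.support ∨ z ∈ Q.support := by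
        intro z hz
        rw [hcyc, Walk.support_cons, List.mem_cons] at hz
        rcases hz with rfl | hz
        · exact Or.inl (Walk.start_mem_support P)
        rw [Walk.support_append, List.mem_append] at hz
        rcases hz with hz | hz
        · refine Or.inl ?_
          rw [hPP', Walk.support_cons]
          exact List.mem_cons_of_mem _ hz
        · refine Or.inr ?_
          rw [hQsupeq]
          exact List.mem_cons_of_mem _ hz
      have hcycpath : (P'.append Q).IsPath := by
        rw [Walk.isPath_def, Walk.support_append]
        apply List.Nodup.append hP'path.support_nodup hQtailnodup
        intro z hzP hzQ
        have hzTA : z ∈ TA := hP'sup z hzP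
        have hzTB : z ∈ TB := hQtailsub z hzQ
        have hzx : z ≠ x := fun h => hxP' (h ▸ hzP)
        have hzy : z ≠ y := fun h => hyQtail (h ▸ hzQ)
        rcases hzTA with hzA | hz
        · rcases hzTB with hzB | hz'
          · exact hAB z hzA hzB
          · rcases hz' with rfl | rfl
            · exact hzx rfl
            · exact hzy rfl
        · rcases hz with rfl | rfl
          · exact hzx rfl
          · exact hzy rfl
      have hedge_notin : s(x, u1) ∉ (P'.append Q).edges := by
        rw [Walk.edges_append, List.mem_append]
        rintro (h | h)
        · exact hxP' (Walk.fst_mem_support_of_mem_edges P' h)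
        · have := Walk.snd_mem_support_of_mem_edges Q h
          have hTBmem : u1 ∈ TB := hQsup u1 this
          rcases hTBmem with hB' | h'
          · exact hAB u1 hu1A hB'
          · rcases h' with rfl | rfl
            · exact hxu1.ne rfl
            · exact hu1y rfl
      have hcyccycle : cyc.IsCycle := by
        rw [hcyc, Walk.cons_isCycle_iff]
        exact ⟨hcycpath, hedge_notin⟩
      have hcyclen : 4 ≤ cyc.length := by
        have : cyc.length = 1 + (P'.length + Q.length) := by
          rw [hcyc, Walk.length_cons, Walk.length_append]
          omega
        have hP'len : P.length = 1 + P'.length := by rw [hPP', Walk.length_cons]; omega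
        omega
      obtain ⟨x'', y'', hx'', hy'', hadj'', hne''⟩ := hG x cyc hcyccycle hcyclen
      -- membership in T's
      have hmemT : ∀ z, z ∈ cyc.support → z ∈ TA ∪ TB := by
        intro z hz
        rcases hcycsup z hz with h | h
        · exact Or.inl (hPsup z h)
        · exact Or.inr (hQsup z h)
      have hclaimA : ∀ z, z ∈ cyc.support → z ∈ TA → z ∈ P.support := by
        intro z hz hzTA
        rcases hcycsup z hz with h | h
        · exact h
        · have hzTB : z ∈ TB := hQsup z h
          rcases hzTA with hzA | hz'
          · rcases hzTB with hzB | hz'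
            · exact absurd hzB (hAB z hzA)
            · rcases hz' with rfl | rfl
              · rw [hPP']; exact Walk.start_mem_support _
              · exact Walk.end_mem_support P
          · rcases hz' with rfl | rfl
            · exact Walk.start_mem_support P
            · exact Walk.end_mem_support P
      have hclaimB : ∀ z, z ∈ cyc.support → z ∈ TB → z ∈ Q.support := by
        intro z hz hzTB
        rcases hcycsup z hz with h | h
        · have hzTA : z ∈ TA := hPsup z h
          rcases hzTB with hzB | hz'
          · rcases hzTA with hzA | hz'
            · exact absurd hzB (hAB z hzA)
            · rcases hz' with rfl | rfl
              · exact Walk.end_mem_support Q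
              · exact Walk.start_mem_support Q
          · rcases hz' with rfl | rfl
            · exact Walk.end_mem_support Q
            · exact Walk.start_mem_support Q
        · exact h
      -- edges inclusion
      have hPedges : ∀ e, e ∈ P.edges → e ∈ cyc.edges := by
        intro e he
        rw [hPP', Walk.edges_cons] at he
        rw [hcyc, Walk.edges_cons, Walk.edges_append]
        rcases List.mem_cons.mp he with rfl | he
        · exact List.mem_cons_self
        · exact List.mem_cons_of_mem _ (List.mem_append_left _ he)
      have hQedges : ∀ e, e ∈ Q.edges → e ∈ cyc.edges := by
        intro e he
        rw [hcyc, Walk.edges_cons, Walk.edges_append]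
        exact List.mem_cons_of_mem _ (List.mem_append_right _ he)
      -- case analysis
      by_cases h1 : x'' ∈ TA ∧ y'' ∈ TA
      · exact hne'' (hPedges _ (min_walk_induced hPsup hPmin
          (hclaimA _ hx'' h1.1) (hclaimA _ hy'' h1.2) hadj''))
      by_cases h2 : x'' ∈ TB ∧ y'' ∈ TB
      · exact hne'' (hQedges _ (min_walk_induced hQsup hQmin
          (hclaimB _ hx'' h2.1) (hclaimB _ hy'' h2.2) hadj''))
      -- mixed case
      have hxy_mem : ∀ z, z = x ∨ z = y → z ∈ TA ∧ z ∈ TB := by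
        rintro z (rfl | rfl)
        · exact ⟨Or.inr (Or.inl rfl), Or.inr (Or.inl rfl)⟩
        · exact ⟨Or.inr (Or.inr rfl), Or.inr (Or.inr rfl)⟩
      have hsplit : ∀ z, z ∈ cyc.support → z ∈ A ∨ z ∈ B ∨ (z ∈ TA ∧ z ∈ TB) := by
        intro z hz
        rcases hmemT z hz with h | h
        · rcases h with h | h
          · exact Or.inl h
          · exact Or.inr (Or.inr (hxy_mem z h))
        · rcases h with h | h
          · exact Or.inr (Or.inl h)
          · exact Or.inr (Or.inr (hxy_mem z h))
      rcases hsplit x'' hx'' with hx3 | hx3 | hx3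
      · rcases hsplit y'' hy'' with h | h | h
        · exact h1 ⟨Or.inl hx3, Or.inl h⟩
        · exact hABadj x'' hx3 y'' h hadj''
        · exact h1 ⟨Or.inl hx3, h.1⟩
      · rcases hsplit y'' hy'' with h | h | h
        · exact hABadj y'' h x'' hx3 hadj''.symm
        · exact h2 ⟨Or.inl hx3, Or.inl h⟩
        · exact h2 ⟨Or.inl hx3, h.2⟩
      · rcases hsplit y'' hy'' with h | h | h
        · exact h1 ⟨hx3.1, Or.inl h⟩
        · exact h2 ⟨hx3.2, Or.inl h⟩
        · exact h1 ⟨hx3.1, h.1⟩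
    -- a simplicial vertex on each side
    have hside : ∀ (r t : V), r ∉ s → t ∉ s →
        (¬ Relation.ReflTransGen (Avoid G s) r t) →
        ∃ z, Relation.ReflTransGen (Avoid G s) r z ∧ IsSimplicial G z := by
      intro r t hr ht hsep_rt
      set Ar : Set V := {u | Relation.ReflTransGen (Avoid G s) r u} with hAr
      set VA : Set V := Ar ∪ ↑s with hVA
      haveI : Fintype ↥VA := Fintype.ofFinite _
      have hclosure : ∀ z ∈ Ar, ∀ w, G.Adj z w → w ∈ VA := by
        intro z hz w hadj
        by_cases hws : w ∈ s
        · exact Or.inr hws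
        · exact Or.inl (avoid_extend hr hz hadj hws)
      have htVA : t ∉ VA := by
        rintro (h | h)
        · exact hsep_rt h
        · exact ht h
      have hcardVA : Fintype.card ↥VA < Fintype.card V := by
        refine Fintype.card_lt_of_injective_of_notMem (Subtype.val) Subtype.val_injective
          (b := t) ?_
        rintro ⟨x0, hx0⟩
        exact htVA (hx0 ▸ x0.prop)
      have hGA := (hG.induce VA)
      have htrans : ∀ (z : V) (hz : z ∈ Ar), IsSimplicial (G.induce VA) ⟨z, Or.inl hz⟩ →
          IsSimplicial G z := by
        intro z hz hsimp p q hzp hzq hpq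
        have hp : p ∈ VA := hclosure z hz p hzp
        have hq : q ∈ VA := hclosure z hz q hzq
        have : (G.induce VA).Adj ⟨p, hp⟩ ⟨q, hq⟩ := by
          apply hsimp ⟨p, hp⟩ ⟨q, hq⟩ hzp hzq
          intro hcon
          exact hpq (congrArg Subtype.val hcon)
        exact this
      rcases IH ↥VA (G.induce VA) (by omega) hGA with hcompA | hsimpA
      · -- induced graph complete: r is simplicial
        have hrAr : r ∈ Ar := Relation.ReflTransGen.refl
        refine ⟨r, hrAr, htrans r hrAr ?_⟩
        intro p q hp hq hpq
        exact hcompA p q hpq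
      · obtain ⟨z1, z2, hz12, hnadj12, hs1, hs2⟩ := hsimpA
        have : z1.val ∈ Ar ∨ z2.val ∈ Ar := by
          by_contra hcon
          push_neg at hcon
          have h1s : z1.val ∈ s := by
            rcases z1.prop with h | h
            · exact absurd h hcon.1
            · exact h
          have h2s : z2.val ∈ s := by
            rcases z2.prop with h | h
            · exact absurd h hcon.2
            · exact h
          have : G.Adj z1.val z2.val := hclique _ h1s _ h2s
            (fun h => hz12 (Subtype.ext h))
          exact hnadj12 this
        rcases this with h | h
        · refine ⟨z1.val, h, htrans z1.val h ?_⟩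
          have : (⟨z1.val, Or.inl h⟩ : ↥VA) = z1 := Subtype.ext rfl
          rw [this]
          exact hs1
        · refine ⟨z2.val, h, htrans z2.val h ?_⟩
          have : (⟨z2.val, Or.inl h⟩ : ↥VA) = z2 := Subtype.ext rfl
          rw [this]
          exact hs2
    obtain ⟨zA, hzA, hzAsimp⟩ := hside a b has hbs hsep
    obtain ⟨zB, hzB, hzBsimp⟩ := hside b a hbs has hsep'
    refine ⟨zA, zB, ?_, ?_, hzAsimp, hzBsimp⟩
    · intro h
      exact hAB zA hzA (h ▸ hzB)
    · exact hABadj zA hzA zB hzB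

theorem exists_simplicial {V : Type} [Fintype V] [DecidableEq V] [Nonempty V]
    (G : SimpleGraph V) (hG : IsChordal G) : ∃ v, IsSimplicial G v := by
  rcases dirac_aux (Fintype.card V) V G le_rfl hG with h | ⟨x, _, _, _, hx, _⟩
  · refine ⟨Classical.arbitrary V, ?_⟩
    intro p q _ _ hpq
    exact h p q hpq
  · exact ⟨x, hx⟩

end Dirac

section Main

theorem kempe_aux : ∀ (N : ℕ) (V : Type) [Fintype V] [DecidableEq V] (C : Type*) [DecidableEq C]
    (G : SimpleGraph V), Fintype.card V ≤ N → IsChordal G →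
    ∀ (α β : V → C), IsProperColoring G α → IsProperColoring G β →
    KempeEquivIn G (IsProperColoring G) (Fintype.card V) α β := by
  intro N
  induction N with
  | zero =>
    intro V _ _ C _ G hcard _ α β hα _
    haveI : IsEmpty V := Fintype.card_eq_zero_iff.mp (Nat.le_zero.mp hcard)
    have : α = β := funext fun x => isEmptyElim x
    exact ⟨0, fun _ => α, Nat.zero_le _, rfl, this ▸ rfl,
      fun i _ => hα, fun i hi => absurd hi (Nat.not_lt_zero i)⟩
  | succ N IH =>
    intro V _ _ C _ G hcard hG α β hα hβ
    by_cases hV : Fintype.card V = 0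
    · haveI : IsEmpty V := Fintype.card_eq_zero_iff.mp hV
      have : α = β := funext fun x => isEmptyElim x
      exact ⟨0, fun _ => α, Nat.zero_le _, rfl, this ▸ rfl,
        fun i _ => hα, fun i hi => absurd hi (Nat.not_lt_zero i)⟩
    haveI : Nonempty V := Fintype.card_pos_iff.mp (Nat.pos_of_ne_zero hV)
    obtain ⟨v, hv⟩ := exists_simplicial G hG
    classical
    set S : Set V := {u | u ≠ v} with hS
    have hcardS : Fintype.card ↥S = Fintype.card V - 1 := by
      have e : ↥S ≃ {u // ¬ u = v} := Equiv.subtypeEquivRight (fun u => Iff.rfl)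
      rw [Fintype.card_congr e, Fintype.card_subtype_compl, Fintype.card_subtype_eq]
    have hcardS' : Fintype.card ↥S ≤ N := by omega
    set G' : SimpleGraph ↥S := G.induce S with hG'
    have hG'chordal : IsChordal G' := hG.induce S
    set α' : ↥S → C := fun x => α x.val with hα'
    set β' : ↥S → C := fun x => β x.val with hβ'
    have hα'p : IsProperColoring G' α' := fun u w hadj => hα hadj
    have hβ'p : IsProperColoring G' β' := fun u w hadj => hβ hadj
    obtain ⟨m, f', hm, hf0, hfm, hP, hsteps⟩ :=
      IH ↥S C G' hcardS' hG'chordal α' β' hα'p hβ'p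
    have hsteps' : ∀ i, i < m → ∃ (a b : C) (u : ↥S), ((f' i) u = a ∨ (f' i) u = b) ∧
        (∀ z, InKempeChain G' (f' i) a b u z → f' (i+1) z = Equiv.swap a b ((f' i) z)) ∧
        (∀ z, ¬InKempeChain G' (f' i) a b u z → f' (i+1) z = (f' i) z) :=
      fun i hi => hsteps i hi
    choose ca cb cu hcu hc1 hc2 using hsteps'
    set F : ℕ → V → C := fun n => Nat.rec α
      (fun i Fi => if hi : i < m then kempeApply G Fi (ca i hi) (cb i hi) (cu i hi).val else Fi)
      n with hF
    have hF0 : F 0 = α := rfl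
    have hFs : ∀ i, F (i+1) =
        if hi : i < m then kempeApply G (F i) (ca i hi) (cb i hi) (cu i hi).val else F i :=
      fun i => rfl
    have key : ∀ i, i ≤ m → (∀ x : ↥S, F i x.val = f' i x) ∧ IsProperColoring G (F i) := by
      intro i
      induction i with
      | zero =>
        intro _
        refine ⟨?_, hF0 ▸ hα⟩
        intro x
        rw [hF0, hf0]
      | succ i ih =>
        intro hi1
        have hi : i < m := hi1
        obtain ⟨hres, hprop⟩ := ih (le_of_lt hi)
        have hls := lift_step hv hprop (γ' := f' i) (δ' := f' (i+1)) hres (hcu i hi)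
          (hc1 i hi) (hc2 i hi)
        rw [hFs i, dif_pos hi]
        exact ⟨hls.2.1, hls.2.2⟩
    have hstepG : ∀ i (hi : i < m), KempeStep G (F i) (F (i+1)) := by
      intro i hi
      obtain ⟨hres, hprop⟩ := key i (le_of_lt hi)
      have hls := lift_step hv hprop (γ' := f' i) (δ' := f' (i+1)) hres (hcu i hi)
        (hc1 i hi) (hc2 i hi)
      rw [hFs i, dif_pos hi]
      exact hls.1
    have hres_m : ∀ x : ↥S, F m x.val = β x.val := by
      intro x
      rw [(key m le_rfl).1 x, hfm]
    have hmN : m ≤ Fintype.card V - 1 := le_trans hm (by omega)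
    have hcardpos : 1 ≤ Fintype.card V := Nat.pos_of_ne_zero hV
    by_cases hveq : F m v = β v
    · have hFmβ : F m = β := by
        funext x
        by_cases hx : x = v
        · rw [hx]; exact hveq
        · exact hres_m ⟨x, hx⟩
      exact ⟨m, F, by omega, hF0, hFmβ,
        fun i hi => (key i hi).2, fun i hi => hstepG i hi⟩
    · set δ := kempeApply G (F m) (F m v) (β v) v with hδ
      have hnb : ∀ w, G.Adj v w → ¬(F m w = F m v ∨ F m w = β v) := by
        intro w hadj hcon
        have hwv : w ≠ v := hadj.ne'
        rcases hcon with h | h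
        · exact (key m le_rfl).2 hadj.symm h
        · have hwβ : F m w = β w := hres_m ⟨w, hwv⟩
          rw [hwβ] at h
          exact hβ hadj h.symm
      have hchain1 : ∀ z, InKempeChain G (F m) (F m v) (β v) v z → z = v :=
        chain_singleton hnb
      have hδβ : δ = β := by
        funext z
        by_cases hz : z = v
        · subst hz
          rw [hδ, kempeApply_of_mem Relation.ReflTransGen.refl, Equiv.swap_apply_left]
        · rw [hδ, kempeApply_of_not_mem (fun hc => hz (hchain1 z hc))]
          exact hres_m ⟨z, hz⟩
      have hstep_last : KempeStep G (F m) δ := kempeStep_kempeApply (Or.inl rfl)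
      refine ⟨m + 1, fun i => if i ≤ m then F i else β, by omega, ?_, ?_, ?_, ?_⟩
      · show (if 0 ≤ m then F 0 else β) = α
        rw [if_pos (Nat.zero_le m)]
        exact hF0
      · show (if m + 1 ≤ m then F (m + 1) else β) = β
        rw [if_neg (by omega)]
      · intro i hi
        show IsProperColoring G (if i ≤ m then F i else β)
        by_cases h : i ≤ m
        · rw [if_pos h]
          exact (key i h).2
        · rw [if_neg h]
          exact hβ
      · intro i hi
        show KempeStep G (if i ≤ m then F i else β) (if i + 1 ≤ m then F (i + 1) else β)
        by_cases h : i < m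
        · rw [if_pos (le_of_lt h), if_pos (by omega : i + 1 ≤ m)]
          exact hstepG i h
        · have hieq : i = m := by omega
          subst hieq
          rw [if_pos le_rfl, if_neg (by omega)]
          exact hδβ ▸ hstep_last

end Main

theorem statement_11 (n p : ℕ) (hp : 1 ≤ p) (G : SimpleGraph (Fin n)) (hG : IsChordal G)
    (α β : Fin n → Fin p) (hα : IsProperColoring G α) (hβ : IsProperColoring G β) :
    KempeEquivIn G (IsProperColoring G) n α β := by
  have h := kempe_aux n (Fin n) (Fin p) G (by rw [Fintype.card_fin]) hG α β hα hβ
  rwa [Fintype.card_fin] at h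
end
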